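/- arXiv:2009.12889 — 9 statements merged into one kernel-verified Lean document; each statement's English description precedes it below -/
import Mathlib

section
/- For every ordinal α with 1 ≤ α < ω₁ there exists a closed set F ⊆ 2^ω × ω^ω such that every section F_x (x ∈ 2^ω) contains at most one point and for every sequence of partial functions f_n : H_n → ω^ω with H_n ⊆ 2^ω whose graphs satisfy ⋃_{n∈ℕ} graph(f_n) = F, at least one f_n fails to be Σ⁰_α-measurable, i.e., for some n there exists an open set V ⊆ ω^ω such that f_n⁻¹(V) is not of the form H_n ∩ S for any S in the additive Borel class Σ⁰_α(2^ω). -/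
/-- The additive Borel class `Σ⁰_α(Z)` of a topological space `Z`. -/
noncomputable def Sigma0 (Z : Type*) [TopologicalSpace Z] (α : Ordinal) : Set (Set Z) :=
  {s | (α = 1 ∧ IsOpen s) ∨
       (1 < α ∧ ∃ A : ℕ → Set Z, ∃ β : ℕ → Ordinal,
          (∀ n : ℕ, 1 ≤ β n ∧ ∃ hb : β n < α, A n ∈ Sigma0 Z (β n)) ∧ s = ⋃ n, (A n)ᶜ)}
termination_by α
decreasing_by exact hb


open Set Function

noncomputable section

namespace NC

/-- `Par B`: there is a closed subset of `Z × ω^ω` whose sections are singletons over `B`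
and empty off `B`. -/
def Par {Z : Type*} [TopologicalSpace Z] (B : Set Z) : Prop :=
  ∃ C : Set (Z × (ℕ → ℕ)), IsClosed C ∧
    (∀ z, z ∈ B → ∃! w : ℕ → ℕ, (z, w) ∈ C) ∧
    (∀ z, z ∉ B → ∀ w : ℕ → ℕ, (z, w) ∉ C)

lemma Par.of_isClosed {Z : Type*} [TopologicalSpace Z] {B : Set Z} (hB : IsClosed B) :
    Par B := by
  refine ⟨B ×ˢ ({fun _ => 0} : Set (ℕ → ℕ)), hB.prod isClosed_singleton, ?_, ?_⟩
  · intro z hz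
    exact ⟨fun _ => 0, ⟨hz, rfl⟩, fun w hw => hw.2⟩
  · intro z hz w hw
    exact hz hw.1

lemma Par.preimage {Z Z' : Type*} [TopologicalSpace Z] [TopologicalSpace Z'] {B : Set Z}
    (hB : Par B) {g : Z' → Z} (hg : Continuous g) : Par (g ⁻¹' B) := by
  obtain ⟨C, hC, h1, h2⟩ := hB
  refine ⟨(fun p : Z' × (ℕ → ℕ) => (g p.1, p.2)) ⁻¹' C,
    hC.preimage (hg.comp continuous_fst |>.prodMk continuous_snd), ?_, ?_⟩
  · intro z hz
    obtain ⟨w, hw, huniq⟩ := h1 (g z) hz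
    exact ⟨w, hw, fun w' hw' => huniq w' hw'⟩
  · intro z hz w hw
    exact h2 (g z) hz w hw

lemma Par.iInter {Z : Type*} [TopologicalSpace Z] {B : ℕ → Set Z} (hB : ∀ n, Par (B n)) :
    Par (⋂ n, B n) := by
  choose C hCc h1 h2 using hB
  refine ⟨⋂ n, (fun p : Z × (ℕ → ℕ) => (p.1, fun k => p.2 (Nat.pair n k))) ⁻¹' C n,
    isClosed_iInter (fun n => (hCc n).preimage (continuous_fst.prodMk
      (continuous_pi fun k => continuous_apply _ |>.comp continuous_snd))), ?_, ?_⟩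
  · intro z hz
    simp only [mem_iInter] at hz
    choose wn hwn huniq using fun n => h1 n z (hz n)
    refine ⟨fun m => wn (Nat.unpair m).1 (Nat.unpair m).2, ?_, ?_⟩
    · simp only [mem_iInter, mem_preimage]
      intro n
      convert hwn n using 2
      funext k
      simp [Nat.unpair_pair]
    · intro w' hw'
      simp only [mem_iInter, mem_preimage] at hw'
      funext m
      have h5 := huniq (Nat.unpair m).1 _ (hw' (Nat.unpair m).1)
      calc w' m = w' (Nat.pair (Nat.unpair m).1 (Nat.unpair m).2) := by rw [Nat.pair_unpair]
        _ = wn (Nat.unpair m).1 (Nat.unpair m).2 := congrFun h5 _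
  · intro z hz w hw
    simp only [mem_iInter, mem_preimage] at hw
    rw [mem_iInter] at hz
    push_neg at hz
    obtain ⟨n, hn⟩ := hz
    exact h2 n z hn _ (hw n)

lemma Par.univ {Z : Type*} [TopologicalSpace Z] : Par (Set.univ : Set Z) :=
  Par.of_isClosed isClosed_univ

/-- disjoint countable unions -/
lemma Par.iUnion_of_disjoint {Z : Type*} [TopologicalSpace Z] {B : ℕ → Set Z}
    (hB : ∀ n, Par (B n)) (hd : ∀ m n, m ≠ n → ∀ z, z ∈ B m → z ∉ B n) :
    Par (⋃ n, B n) := by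
  choose C hCc h1 h2 using hB
  refine ⟨⋂ n, ({p : Z × (ℕ → ℕ) | p.2 0 ≠ n} ∪
      ((fun p : Z × (ℕ → ℕ) => (p.1, fun k => p.2 (k + 1))) ⁻¹' C n)), ?_, ?_, ?_⟩
  · refine isClosed_iInter fun n => IsClosed.union ?_ ?_
    · have he : {p : Z × (ℕ → ℕ) | p.2 0 ≠ n} =
          (fun p : Z × (ℕ → ℕ) => p.2 0) ⁻¹' ({n}ᶜ) := rfl
      rw [he]
      exact (isClosed_discrete _).preimage ((continuous_apply 0).comp continuous_snd)
    · exact (hCc n).preimage (continuous_fst.prodMk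
        (continuous_pi fun k => (continuous_apply _).comp continuous_snd))
  · intro z hz
    rw [mem_iUnion] at hz
    obtain ⟨n0, hn0⟩ := hz
    obtain ⟨w0, hw0, huniq0⟩ := h1 n0 z hn0
    refine ⟨fun k => if k = 0 then n0 else w0 (k - 1), ?_, ?_⟩
    · simp only [mem_iInter, mem_union, mem_setOf_eq, mem_preimage]
      intro n
      by_cases hn : n = n0
      · subst hn
        right
        have he : (fun k => if k + 1 = 0 then n else w0 (k + 1 - 1)) = w0 := by
          funext k; simp
        show (z, fun k => if k + 1 = 0 then n else w0 (k + 1 - 1)) ∈ C n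
        rw [he]; exact hw0
      · left; simpa using (Ne.symm hn)
    · intro w' hw'
      simp only [mem_iInter, mem_union, mem_setOf_eq, mem_preimage] at hw'
      have hne : w' 0 = n0 := by
        rcases hw' (w' 0) with h | h
        · exact absurd rfl h
        · by_contra hc
          have hzB : z ∉ B (w' 0) := hd n0 (w' 0) (fun he => hc he.symm) z hn0
          exact h2 _ z hzB _ h
      rcases hw' n0 with h | h
      · exact absurd hne h
      · have : (fun k => w' (k + 1)) = w0 := huniq0 _ h
        funext k
        rcases Nat.eq_zero_or_pos k with hk | hk
        · subst hk; simpa using hne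
        · have hk1 : k = (k - 1) + 1 := by omega
          simp only [if_neg (by omega : ¬ k = 0)]
          rw [hk1]
          exact congrFun this (k - 1)
  · intro z hz w hw
    simp only [mem_iInter, mem_union, mem_setOf_eq, mem_preimage] at hw
    rcases hw (w 0) with h | h
    · exact h rfl
    · refine h2 (w 0) z ?_ _ h
      intro hmem
      rw [mem_iUnion] at hz
      exact hz ⟨w 0, hmem⟩

end NC

namespace NC

/-- `B` and its complement are both parameterizable. -/
def BP {Z : Type*} [TopologicalSpace Z] (B : Set Z) : Prop := Par B ∧ Par Bᶜ

lemma BP.compl {Z : Type*} [TopologicalSpace Z] {B : Set Z} (h : BP B) : BP Bᶜ := by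
  refine ⟨h.2, ?_⟩
  rw [compl_compl]
  exact h.1

lemma BP.of_isClopen {Z : Type*} [TopologicalSpace Z] {B : Set Z} (h : IsClopen B) : BP B :=
  ⟨Par.of_isClosed h.isClosed, Par.of_isClosed (isClosed_compl_iff.mpr h.isOpen)⟩

lemma BP.preimage {Z Z' : Type*} [TopologicalSpace Z] [TopologicalSpace Z'] {B : Set Z}
    (hB : BP B) {g : Z' → Z} (hg : Continuous g) : BP (g ⁻¹' B) :=
  ⟨hB.1.preimage hg, by rw [← preimage_compl]; exact hB.2.preimage hg⟩

lemma BP.iUnion {Z : Type*} [TopologicalSpace Z] {B : ℕ → Set Z} (hB : ∀ n, BP (B n)) :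
    BP (⋃ n, B n) := by
  constructor
  · -- disjointify
    set D : ℕ → Set Z := fun n => B n ∩ ⋂ m, ⋂ (_ : m < n), (B m)ᶜ with hD
    have hDpar : ∀ n, Par (D n) := by
      intro n
      have : D n = ⋂ j, (fun j : ℕ => if j = 0 then B n else
          (if j - 1 < n then (B (j - 1))ᶜ else Set.univ)) j := by
        ext z
        simp only [hD, mem_inter_iff, mem_iInter, mem_compl_iff]
        constructor
        · rintro ⟨h1, h2⟩ j
          by_cases hj : j = 0
          · simpa [hj] using h1
          · by_cases hj2 : j - 1 < n
            · simpa [hj, hj2] using h2 (j - 1) hj2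
            · simp [hj, hj2]
        · intro h
          constructor
          · simpa using h 0
          · intro m hm
            have := h (m + 1)
            simpa [Nat.succ_ne_zero, hm] using this
      rw [this]
      refine Par.iInter fun j => ?_
      by_cases hj : j = 0
      · simpa [hj] using (hB n).1
      · by_cases hj2 : j - 1 < n
        · simpa [hj, hj2] using (hB (j - 1)).2
        · simpa [hj, hj2] using Par.univ
    have hcover : (⋃ n, B n) = ⋃ n, D n := by
      ext z
      simp only [mem_iUnion, hD, mem_inter_iff, mem_iInter, mem_compl_iff]
      constructor
      · intro ⟨n, hn⟩
        have hex : ∃ n, z ∈ B n := ⟨n, hn⟩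
        classical
        refine ⟨Nat.find hex, Nat.find_spec hex, ?_⟩
        intro m hm
        exact Nat.find_min hex hm
      · rintro ⟨n, hn, _⟩
        exact ⟨n, hn⟩
    rw [hcover]
    refine Par.iUnion_of_disjoint hDpar ?_
    intro m n hmn z hzm hzn
    rcases Nat.lt_or_ge m n with h | h
    · have h3 := mem_iInter.mp (mem_iInter.mp hzn.2 m) h
      exact h3 hzm.1
    · have hnm : n < m := by omega
      have h3 := mem_iInter.mp (mem_iInter.mp hzm.2 n) hnm
      exact h3 hzn.1
  · rw [compl_iUnion]
    exact Par.iInter fun n => (hB n).2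

lemma BP.iInter {Z : Type*} [TopologicalSpace Z] {B : ℕ → Set Z} (hB : ∀ n, BP (B n)) :
    BP (⋂ n, B n) := by
  have := (BP.iUnion (fun n => (hB n).compl)).compl
  simpa [compl_iUnion, compl_compl] using this

lemma BP.union {Z : Type*} [TopologicalSpace Z] {A B : Set Z} (hA : BP A) (hB : BP B) :
    BP (A ∪ B) := by
  have h : (A ∪ B) = ⋃ n, (fun n : ℕ => if n = 0 then A else B) n := by
    ext z
    simp only [mem_iUnion, mem_union]
    constructor
    · rintro (h | h)
      · exact ⟨0, by simpa using h⟩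
      · exact ⟨1, by simpa using h⟩
    · rintro ⟨n, hn⟩
      by_cases h0 : n = 0
      · left; simpa [h0] using hn
      · right; simpa [h0] using hn
  rw [h]
  refine BP.iUnion fun n => ?_
  by_cases h0 : n = 0 <;> simp [h0, hA, hB]

lemma BP.inter {Z : Type*} [TopologicalSpace Z] {A B : Set Z} (hA : BP A) (hB : BP B) :
    BP (A ∩ B) := by
  have h : A ∩ B = ((Aᶜ) ∪ (Bᶜ))ᶜ := by rw [compl_union, compl_compl, compl_compl]
  rw [h]
  exact (hA.compl.union hB.compl).compl

lemma BP.of_isClosed {Z : Type*} [TopologicalSpace Z] {B : Set Z}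
    (h : IsClosed B) (h2 : Par Bᶜ) : BP B := ⟨Par.of_isClosed h, h2⟩

end NC

namespace NC

abbrev XB : Type := ℕ → Bool

/-- decode a natural number to a finite binary string -/
def dec (m : ℕ) : List Bool := (Encodable.decode (α := List Bool) m).getD []

/-- the basic cylinder coded by `m` -/
def Cyl (m : ℕ) : Set XB := {x | ∀ i < (dec m).length, x i = (dec m).getD i false}

lemma isClopen_eqset (i : ℕ) (v : Bool) : IsClopen {x : XB | x i = v} := by
  have h : {x : XB | x i = v} = (fun x : XB => x i) ⁻¹' {v} := rfl
  rw [h]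
  exact (isClopen_discrete {v}).preimage (continuous_apply i)

lemma isClopen_prefix (n : ℕ) (c : ℕ → Bool) : IsClopen {x : XB | ∀ i < n, x i = c i} := by
  have h : {x : XB | ∀ i < n, x i = c i} = ⋂ i : Fin n, {x : XB | x i.1 = c i.1} := by
    ext x
    simp only [mem_setOf_eq, mem_iInter]
    exact ⟨fun h i => h i.1 i.2, fun h i hi => h ⟨i, hi⟩⟩
  rw [h]
  exact isClopen_iInter_of_finite fun i => isClopen_eqset i.1 (c i.1)

lemma isClopen_Cyl (m : ℕ) : IsClopen (Cyl m) := by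
  have h : Cyl m = {x : XB | ∀ i < (dec m).length, x i = (dec m).getD i false} := rfl
  rw [h]
  exact isClopen_prefix _ _

lemma open_basis {O : Set XB} (hO : IsOpen O) {x : XB} (hx : x ∈ O) :
    ∃ n : ℕ, {y : XB | ∀ i < n, y i = x i} ⊆ O := by
  have hmem : O ∈ nhds x := hO.mem_nhds hx
  rw [nhds_pi] at hmem
  rw [Filter.mem_pi'] at hmem
  obtain ⟨I, t, ht, hsub⟩ := hmem
  refine ⟨(I.sup id) + 1, ?_⟩
  intro y hy
  apply hsub
  intro i hi
  have hle : i ≤ I.sup id := Finset.le_sup (f := id) hi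
  have : y i = x i := hy i (by omega)
  rw [this]
  have := ht i
  simpa [nhds_discrete] using this

/-- every open set of `2^ω` is the union of the cylinders it contains -/
lemma open_eq_union_cyl {O : Set XB} (hO : IsOpen O) :
    O = ⋃ m, ⋃ (_ : Cyl m ⊆ O), Cyl m := by
  ext x
  simp only [mem_iUnion]
  constructor
  · intro hx
    obtain ⟨n, hn⟩ := open_basis hO hx
    set l : List Bool := List.ofFn (fun i : Fin n => x i.1) with hl
    refine ⟨Encodable.encode l, ?_, ?_⟩
    · intro y hy
      apply hn
      intro i hi
      have hdec : dec (Encodable.encode l) = l := by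
        simp [dec, Encodable.encodek]
      have hlen : (dec (Encodable.encode l)).length = n := by
        rw [hdec, hl]; simp
      have := hy i (by rw [hlen]; exact hi)
      rw [hdec] at this
      rw [this, hl]
      simp [List.getD, hi]
    · intro i hi
      have hdec : dec (Encodable.encode l) = l := by simp [dec, Encodable.encodek]
      rw [hdec]
      rw [hdec] at hi
      have hi' : i < n := by simpa [hl] using hi
      rw [hl]
      simp [List.getD, hi']
  · rintro ⟨m, hsub, hmem⟩
    exact hsub hmem

end NC

namespace NC

/-- position of the first `true`, or `0` if none -/
noncomputable def theta (z : XB) : ℕ := sInf {m | z m = true}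

lemma theta_eq (z : XB) (m : ℕ) (h1 : z m = true) (h2 : ∀ i < m, z i = false) :
    theta z = m := by
  have hne : {k | z k = true}.Nonempty := ⟨m, h1⟩
  have hmem : theta z ∈ {k | z k = true} := Nat.sInf_mem hne
  have hle : theta z ≤ m := Nat.sInf_le h1
  rcases Nat.lt_or_ge (theta z) m with hlt | hge
  · have h3 := h2 _ hlt
    simp only [mem_setOf_eq] at hmem
    rw [h3] at hmem
    exact absurd hmem (by simp)
  · omega

lemma theta_fiber_BP (m : ℕ) : BP {z : XB | theta z = m} := by
  classical
  have hdescr : {z : XB | theta z = m} =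
      ({z : XB | z m = true} ∩ ⋂ i, ⋂ (_ : i < m), {z : XB | z i = false}) ∪
      (⋃ (_ : m = 0), ⋂ i, {z : XB | z i = false}) := by
    ext z
    simp only [mem_setOf_eq, mem_union, mem_inter_iff, mem_iInter, mem_iUnion]
    constructor
    · intro h
      by_cases hex : {k | z k = true}.Nonempty
      · left
        have hmem : theta z ∈ {k | z k = true} := Nat.sInf_mem hex
        rw [h] at hmem
        refine ⟨hmem, ?_⟩
        intro i hi
        by_contra hc
        have hi2 : z i = true := by
          cases hzi : z i
          · exact absurd hzi hc
          · rfl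
        have h5 : theta z ≤ i := Nat.sInf_le (show i ∈ {k | z k = true} from hi2)
        rw [h] at h5
        omega
      · right
        have hz : ∀ i, z i = false := by
          intro i
          cases hzi : z i
          · rfl
          · exact absurd ⟨i, hzi⟩ hex
        have h0 : theta z = 0 := by
          have : {k | z k = true} = ∅ := by
            ext k; simp [hz k]
          simp [theta, this]
        rw [← h, h0]
        exact ⟨rfl, hz⟩
    · rintro (⟨h1, h2⟩ | ⟨h0, hall⟩)
      · exact theta_eq z m h1 (fun i hi => h2 i hi)
      · have : {k | z k = true} = ∅ := by
          ext k
          simp [hall k]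
        simp [theta, this, h0.symm]
  rw [hdescr]
  refine BP.union (BP.inter (BP.of_isClopen (isClopen_eqset m true)) ?_) ?_
  · refine BP.iInter fun i => ?_
    by_cases hi : i < m
    · simpa [hi] using BP.of_isClopen (isClopen_eqset i false)
    · simpa [hi] using BP.of_isClopen isClopen_univ
  · by_cases h0 : m = 0
    · have : (⋃ (_ : m = 0), ⋂ i, {z : XB | z i = false}) = ⋂ i, {z : XB | z i = false} := by
        simp [h0]
      rw [this]
      exact BP.iInter fun i => BP.of_isClopen (isClopen_eqset i false)
    · have : (⋃ (_ : m = 0), ⋂ i, {z : XB | z i = false}) = (∅ : Set XB) := by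
        simp [h0]
      rw [this]
      exact BP.of_isClopen isClopen_empty

lemma theta_indicator (m : ℕ) : theta (fun k => decide (k = m)) = m :=
  theta_eq _ m (by simp) (fun i hi => by simp; omega)

/-- rows of a code -/
def row (e : XB) (n : ℕ) : XB := fun k => e (Nat.pair n k)

lemma continuous_row (n : ℕ) : Continuous fun e : XB => row e n :=
  continuous_pi fun k => continuous_apply _

/-- index part of the `n`-th block -/
noncomputable def idx (e : XB) (n : ℕ) : ℕ := theta (row e (2 * n))

/-- code part of the `n`-th block -/
def sub (e : XB) (n : ℕ) : XB := row e (2 * n + 1)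

open Classical in
/-- a surjection onto the ordinals in `[1, α)`, when one exists -/
noncomputable def gsur (α : Ordinal) (h : 1 < α) : ℕ → {β : Ordinal // 1 ≤ β ∧ β < α} :=
  if hc : ∃ f : ℕ → {β : Ordinal // 1 ≤ β ∧ β < α}, Function.Surjective f then hc.choose
  else fun _ => ⟨1, le_refl 1, h⟩

open Classical Cardinal in
lemma gsur_surjective (α : Ordinal) (h : 1 < α) (hα2 : α < (Cardinal.aleph 1).ord) :
    Function.Surjective (gsur α h) := by
  have hne : Nonempty {β : Ordinal // 1 ≤ β ∧ β < α} := ⟨⟨1, le_refl 1, h⟩⟩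
  have h3 : α.card < Cardinal.aleph 1 := Cardinal.lt_ord.mp hα2
  have h4 : α.card ≤ Cardinal.aleph0 := by
    rw [← Cardinal.succ_aleph0] at h3
    exact Order.lt_succ_iff.mp h3
  have hco : Countable (Set.Iio α) := by
    rw [← Cardinal.mk_le_aleph0_iff]
    calc #(Set.Iio α) = Cardinal.lift α.card := Ordinal.mk_Iio_ordinal α
      _ ≤ Cardinal.lift Cardinal.aleph0 := Cardinal.lift_le.mpr h4
      _ = Cardinal.aleph0 := Cardinal.lift_aleph0
  have hcnt : Countable {β : Ordinal // 1 ≤ β ∧ β < α} := by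
    have hinj : Function.Injective (fun b : {β : Ordinal // 1 ≤ β ∧ β < α} =>
        (⟨b.1, b.2.2⟩ : Set.Iio α)) := by
      intro a b hab
      apply Subtype.ext
      have : ((⟨a.1, a.2.2⟩ : Set.Iio α) : Ordinal) = ((⟨b.1, b.2.2⟩ : Set.Iio α) : Ordinal) :=
        congrArg Subtype.val hab
      exact this
    exact hinj.countable
  have hex : ∃ f : ℕ → {β : Ordinal // 1 ≤ β ∧ β < α}, Function.Surjective f :=
    exists_surjective_nat _
  rw [gsur, dif_pos hex]
  exact hex.choose_spec

/-- the universal membership set -/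
noncomputable def W (α : Ordinal) : Set (XB × XB) :=
  {p | (α = 1 ∧ ∃ m, p.1 m = true ∧ p.2 ∈ Cyl m) ∨
       (∃ h : 1 < α, ∃ n, (sub p.1 n, p.2) ∉ W ((gsur α h (idx p.1 n)).1))}
termination_by α
decreasing_by exact (gsur α h (idx p.1 n)).2.2

lemma W_mem (α : Ordinal) (p : XB × XB) :
    p ∈ W α ↔ ((α = 1 ∧ ∃ m, p.1 m = true ∧ p.2 ∈ Cyl m) ∨
       (∃ h : 1 < α, ∃ n, (sub p.1 n, p.2) ∉ W ((gsur α h (idx p.1 n)).1))) := by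
  conv_lhs => rw [W]
  exact Iff.rfl


end NC

namespace NC

lemma Sigma0_mem (Z : Type*) [TopologicalSpace Z] (α : Ordinal) (s : Set Z) :
    s ∈ Sigma0 Z α ↔ ((α = 1 ∧ IsOpen s) ∨
      (1 < α ∧ ∃ A : ℕ → Set Z, ∃ β : ℕ → Ordinal,
        (∀ n : ℕ, 1 ≤ β n ∧ ∃ _ : β n < α, A n ∈ Sigma0 Z (β n)) ∧ s = ⋃ n, (A n)ᶜ)) := by
  conv_lhs => rw [Sigma0]
  exact Iff.rfl

lemma W_one : ∀ p : XB × XB, p ∈ W 1 ↔ ∃ m, p.1 m = true ∧ p.2 ∈ Cyl m := by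
  intro p
  rw [W_mem]
  constructor
  · rintro (⟨_, hm⟩ | ⟨h, _⟩)
    · exact hm
    · exact absurd h (lt_irrefl 1)
  · intro hm
    exact Or.inl ⟨rfl, hm⟩

lemma W_sections_Sigma0 : ∀ α : Ordinal, 1 ≤ α → ∀ e : XB,
    {x : XB | (e, x) ∈ W α} ∈ Sigma0 XB α := by
  intro α
  induction α using Ordinal.induction with
  | h α IH =>
    intro hα1 e
    rcases lt_or_eq_of_le hα1 with h1 | h1
    · rw [Sigma0_mem]
      right
      refine ⟨h1, fun n => {x | (sub e n, x) ∈ W ((gsur α h1 (idx e n)).1)},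
        fun n => (gsur α h1 (idx e n)).1, ?_, ?_⟩
      · intro n
        exact ⟨(gsur α h1 (idx e n)).2.1, (gsur α h1 (idx e n)).2.2,
          IH _ (gsur α h1 (idx e n)).2.2 (gsur α h1 (idx e n)).2.1 _⟩
      · ext x
        have hW := W_mem α (e, x)
        simp only [mem_setOf_eq, mem_iUnion, mem_compl_iff]
        rw [hW]
        constructor
        · rintro (⟨ha, _⟩ | ⟨h, n, hn⟩)
          · rw [ha] at h1; exact absurd h1 (lt_irrefl 1)
          · have : h = h1 := proof_irrel h h1
            subst this
            exact ⟨n, hn⟩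
        · rintro ⟨n, hn⟩
          exact Or.inr ⟨h1, n, hn⟩
    · subst h1
      rw [Sigma0_mem]
      left
      refine ⟨rfl, ?_⟩
      have hrepr : {x : XB | ((e, x) : XB × XB) ∈ W 1} =
          ⋃ m, ⋃ (_ : e m = true), Cyl m := by
        ext x
        simp only [mem_setOf_eq, mem_iUnion, W_one]
        constructor
        · rintro ⟨m, hm, hx⟩
          exact ⟨m, hm, hx⟩
        · rintro ⟨m, hm, hx⟩
          exact ⟨m, hm, hx⟩
      rw [hrepr]
      exact isOpen_iUnion fun m => isOpen_iUnion fun _ => (isClopen_Cyl m).isOpen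

lemma W_sections_surjective : ∀ α : Ordinal, 1 ≤ α → α < (Cardinal.aleph 1).ord →
    ∀ S ∈ Sigma0 XB α, ∃ e : XB, {x : XB | (e, x) ∈ W α} = S := by
  intro α
  induction α using Ordinal.induction with
  | h α IH =>
    intro hα1 hα2 S hS
    rw [Sigma0_mem] at hS
    rcases hS with ⟨ha, hopen⟩ | ⟨h1, A, β, hAβ, hSeq⟩
    · classical
      subst ha
      refine ⟨fun m => decide (Cyl m ⊆ S), ?_⟩
      ext x
      simp only [mem_setOf_eq, W_one]
      constructor
      · rintro ⟨m, hm, hxm⟩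
        exact (decide_eq_true_eq.mp hm) hxm
      · intro hx
        have hx2 := hx
        rw [open_eq_union_cyl hopen] at hx2
        simp only [mem_iUnion] at hx2
        obtain ⟨m, hsub, hmem⟩ := hx2
        exact ⟨m, decide_eq_true_eq.mpr hsub, hmem⟩
    · have hβ1 : ∀ n, 1 ≤ β n := fun n => (hAβ n).1
      have hβα : ∀ n, β n < α := fun n => (hAβ n).2.1
      have hA : ∀ n, A n ∈ Sigma0 XB (β n) := fun n => (hAβ n).2.2
      have hch : ∀ n, ∃ c : XB, {x : XB | (c, x) ∈ W (β n)} = A n := fun n =>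
        IH (β n) (hβα n) (hβ1 n) (lt_trans (hβα n) hα2) (A n) (hA n)
      choose c hc using hch
      have hmn : ∀ n, ∃ m : ℕ, ((gsur α h1 m).1 : Ordinal) = β n := fun n => by
        obtain ⟨m, hm⟩ := gsur_surjective α h1 hα2 ⟨β n, hβ1 n, hβα n⟩
        exact ⟨m, by rw [hm]⟩
      choose midx hmidx using hmn
      set e : XB := fun j =>
        if (Nat.unpair j).1 % 2 = 0 then decide ((Nat.unpair j).2 = midx ((Nat.unpair j).1 / 2))
        else c ((Nat.unpair j).1 / 2) (Nat.unpair j).2 with he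
      have hidx : ∀ n, idx e n = midx n := by
        intro n
        unfold idx
        have hrow : row e (2 * n) = fun k => decide (k = midx n) := by
          funext k
          simp only [he, row, Nat.unpair_pair]
          have h2 : (2 * n) % 2 = 0 := by omega
          have h3 : (2 * n) / 2 = n := by omega
          rw [if_pos h2, h3]
        rw [hrow, theta_indicator]
      have hsubc : ∀ n, sub e n = c n := by
        intro n
        funext k
        simp only [he, sub, row, Nat.unpair_pair]
        have h2 : ¬ ((2 * n + 1) % 2 = 0) := by omega
        have h3 : (2 * n + 1) / 2 = n := by omega
        rw [if_neg h2, h3]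
      refine ⟨e, ?_⟩
      ext x
      rw [hSeq]
      have hW := W_mem α (e, x)
      simp only [mem_setOf_eq, mem_iUnion, mem_compl_iff]
      rw [hW]
      constructor
      · rintro (⟨ha, _⟩ | ⟨h, n, hn⟩)
        · rw [ha] at h1; exact absurd h1 (lt_irrefl 1)
        · rw [proof_irrel h h1] at hn
          refine ⟨n, ?_⟩
          rw [hidx n] at hn
          intro hxA
          rw [← hc n] at hxA
          apply hn
          rw [hsubc n]
          have hWeq : W ((gsur α h1 (midx n)).1) = W (β n) := by rw [hmidx n]
          rw [hWeq]
          exact hxA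
      · rintro ⟨n, hn⟩
        refine Or.inr ⟨h1, n, ?_⟩
        rw [hidx n, hsubc n]
        have hWeq : W ((gsur α h1 (midx n)).1) = W (β n) := by rw [hmidx n]
        rw [hWeq]
        intro hmem
        apply hn
        rw [← hc n]
        exact hmem

lemma W_BP : ∀ α : Ordinal, 1 ≤ α → BP (W α) := by
  intro α
  induction α using Ordinal.induction with
  | h α IH =>
    intro hα1
    rcases lt_or_eq_of_le hα1 with h1 | h1
    · have hrepr : W α = ⋃ n, ⋃ m, ({p : XB × XB | idx p.1 n = m} ∩
          ((fun p : XB × XB => (sub p.1 n, p.2)) ⁻¹' (W ((gsur α h1 m).1))ᶜ)) := by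
        ext p
        have hW := W_mem α p
        simp only [mem_iUnion, mem_inter_iff, mem_setOf_eq, mem_preimage,
          mem_compl_iff]
        rw [hW]
        constructor
        · rintro (⟨ha, _⟩ | ⟨h, n, hn⟩)
          · rw [ha] at h1; exact absurd h1 (lt_irrefl 1)
          · have : h = h1 := proof_irrel h h1
            subst this
            exact ⟨n, idx p.1 n, rfl, hn⟩
        · rintro ⟨n, m, hm, hnot⟩
          refine Or.inr ⟨h1, n, ?_⟩
          rw [hm]
          exact hnot
      rw [hrepr]
      refine BP.iUnion fun n => BP.iUnion fun m => BP.inter ?_ ?_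
      · have hfib : {p : XB × XB | idx p.1 n = m} =
            (fun p : XB × XB => row p.1 (2 * n)) ⁻¹' {z : XB | theta z = m} := rfl
        rw [hfib]
        exact (theta_fiber_BP m).preimage ((continuous_row _).comp continuous_fst)
      · refine BP.preimage (BP.compl ?_) ?_
        · exact IH _ (gsur α h1 m).2.2 (gsur α h1 m).2.1
        · exact ((continuous_row _).comp continuous_fst).prodMk continuous_snd
    · subst h1
      have hrepr : W 1 = ⋃ m, ({e : XB | e m = true} ×ˢ Cyl m) := by
        ext p
        simp only [W_one, mem_iUnion, mem_prod, mem_setOf_eq]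
      rw [hrepr]
      exact BP.iUnion fun m => BP.of_isClopen ((isClopen_eqset m true).prod (isClopen_Cyl m))

end NC

namespace NC

/-- decode the `n`-th code row from a point -/
def subc (x : XB) (n : ℕ) : XB := fun k => x (Nat.pair n k)

lemma continuous_subc (n : ℕ) : Continuous fun x : XB => subc x n :=
  continuous_pi fun _ => continuous_apply _

/-- diagonal sets -/
def Aset (α : Ordinal) (n : ℕ) : Set XB := {x | (subc x n, x) ∈ W α}

lemma Aset_BP (α : Ordinal) (hα1 : 1 ≤ α) (n : ℕ) : BP (Aset α n) :=
  (W_BP α hα1).preimage ((continuous_subc n).prodMk continuous_id)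

open Classical in
/-- the graph of the diagonal bit function -/
def Bstar (α : Ordinal) : Set (XB × XB) := {q | ∀ n, (q.2 n = true ↔ q.1 ∉ Aset α n)}

lemma Bstar_par (α : Ordinal) (hα1 : 1 ≤ α) : Par (Bstar α) := by
  classical
  have hrepr : Bstar α = ⋂ n,
      (({q : XB × XB | q.2 n = true} ∩ (fun q : XB × XB => q.1) ⁻¹' (Aset α n)ᶜ) ∪
       ({q : XB × XB | q.2 n = false} ∩ (fun q : XB × XB => q.1) ⁻¹' (Aset α n))) := by
    ext q
    simp only [Bstar, mem_setOf_eq, mem_iInter, mem_union, mem_inter_iff, mem_preimage,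
      mem_compl_iff]
    constructor
    · intro h n
      cases hq : q.2 n
      · right
        refine ⟨rfl, ?_⟩
        by_contra hc
        have := (h n).mpr hc
        rw [hq] at this
        exact absurd this (by simp)
      · left
        exact ⟨rfl, (h n).mp hq⟩
    · intro h n
      rcases h n with ⟨h1, h2⟩ | ⟨h1, h2⟩
      · exact ⟨fun _ => h2, fun _ => h1⟩
      · constructor
        · intro ht
          rw [h1] at ht
          exact absurd ht (by simp)
        · intro hna
          exact absurd h2 hna
  rw [hrepr]
  refine (BP.iInter fun n => BP.union (BP.inter ?_ ?_) (BP.inter ?_ ?_)).1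
  · have : {q : XB × XB | q.2 n = true} =
        (fun q : XB × XB => q.2) ⁻¹' {z : XB | z n = true} := rfl
    rw [this]
    exact (BP.of_isClopen (isClopen_eqset n true)).preimage continuous_snd
  · exact ((Aset_BP α hα1 n).compl).preimage continuous_fst
  · have : {q : XB × XB | q.2 n = false} =
        (fun q : XB × XB => q.2) ⁻¹' {z : XB | z n = false} := rfl
    rw [this]
    exact (BP.of_isClopen (isClopen_eqset n false)).preimage continuous_snd
  · exact (Aset_BP α hα1 n).preimage continuous_fst

end NC

namespace NC

open Classical

/-- the pairing map from `2^ω × ω^ω`-data to the witness space -/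
def Phi (r : XB × (ℕ → ℕ)) : (XB × XB) × (ℕ → ℕ) :=
  ((r.1, fun n => decide (r.2 (2 * n) = 1)), fun n => r.2 (2 * n + 1))

lemma continuous_Phi : Continuous Phi := by
  refine Continuous.prodMk (Continuous.prodMk continuous_fst ?_) ?_
  · refine continuous_pi fun n => ?_
    have : (fun r : XB × (ℕ → ℕ) => decide (r.2 (2 * n) = 1)) =
        (fun v : ℕ => decide (v = 1)) ∘ (fun r : XB × (ℕ → ℕ) => r.2 (2 * n)) := rfl
    rw [this]
    exact (continuous_of_discreteTopology).comp ((continuous_apply _).comp continuous_snd)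
  · exact continuous_pi fun n => (continuous_apply _).comp continuous_snd

end NC

theorem NC_main_aux
    (α : Ordinal) (hα1 : 1 ≤ α) (hα2 : α < (Cardinal.aleph 1).ord) :
    ∃ F : Set ((ℕ → Bool) × (ℕ → ℕ)),
      IsClosed F ∧
      (∀ x : ℕ → Bool, {y : ℕ → ℕ | (x, y) ∈ F}.Subsingleton) ∧
      ∀ (H : ℕ → Set (ℕ → Bool)) (f : ℕ → (ℕ → Bool) → (ℕ → ℕ)),
        (⋃ n, {p : (ℕ → Bool) × (ℕ → ℕ) | p.1 ∈ H n ∧ p.2 = f n p.1}) = F →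
        ∃ n : ℕ, ∃ V : Set (ℕ → ℕ), IsOpen V ∧
          ∀ S ∈ Sigma0 (ℕ → Bool) α, {x | x ∈ H n ∧ f n x ∈ V} ≠ H n ∩ S := by
  classical
  open NC in
  obtain ⟨C, hCcl, hC1, hC2⟩ := NC.Bstar_par α hα1
  set F : Set ((ℕ → Bool) × (ℕ → ℕ)) :=
    {r | (∀ n, r.2 (2 * n) ≤ 1) ∧ NC.Phi r ∈ C} with hF
  have hFcl : IsClosed F := by
    have : F = (⋂ n, {r : (ℕ → Bool) × (ℕ → ℕ) | r.2 (2 * n) ≤ 1}) ∩ (NC.Phi ⁻¹' C) := by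
      ext r
      simp only [hF, mem_setOf_eq, mem_inter_iff, mem_iInter, mem_preimage]
    rw [this]
    refine IsClosed.inter (isClosed_iInter fun n => ?_) (hCcl.preimage NC.continuous_Phi)
    have : {r : (ℕ → Bool) × (ℕ → ℕ) | r.2 (2 * n) ≤ 1} =
        (fun r : (ℕ → Bool) × (ℕ → ℕ) => r.2 (2 * n)) ⁻¹' {v : ℕ | v ≤ 1} := rfl
    rw [this]
    exact IsClosed.preimage ((continuous_apply _).comp continuous_snd)
      (isClosed_discrete _)
  -- the bits of a section element are forced
  have hbits : ∀ x : ℕ → Bool, ∀ u : ℕ → ℕ, (x, u) ∈ F →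
      (fun n => decide (u (2 * n) = 1)) = fun n => decide (x ∉ NC.Aset α n) := by
    intro x u hu
    have hB : (x, fun n => decide (u (2 * n) = 1)) ∈ NC.Bstar α := by
      by_contra hc
      exact hC2 _ hc (fun n => u (2 * n + 1)) hu.2
    funext n
    have := hB n
    simp only [decide_eq_true_eq] at this ⊢
    by_cases hx : x ∉ NC.Aset α n
    · simp only [hx, iff_true] at this
      simp [this, hx]
    · simp only [hx, iff_false] at this
      have h2 : ¬ (u (2 * n) = 1) := by
        intro h3
        exact this (by simp [h3])
      simp [h2, hx]
  have hsub : ∀ x : ℕ → Bool, {y : ℕ → ℕ | (x, y) ∈ F}.Subsingleton := by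
    intro x u hu u' hu'
    simp only [mem_setOf_eq] at hu hu'
    have hb1 := hbits x u hu
    have hb2 := hbits x u' hu'
    have hbeq : (fun n => decide (u (2 * n) = 1)) = fun n => decide (u' (2 * n) = 1) := by
      rw [hb1, hb2]
    have hBmem : (x, fun n => decide (u (2 * n) = 1)) ∈ NC.Bstar α := by
      rw [hb1]
      intro n
      simp
    obtain ⟨w, hw, hwu⟩ := hC1 _ hBmem
    have hw1 : (fun n => u (2 * n + 1)) = w := hwu _ hu.2
    have hw2 : (fun n => u' (2 * n + 1)) = w := by
      apply hwu
      show ((x, fun n => decide (u (2 * n) = 1)), fun n => u' (2 * n + 1)) ∈ C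
      rw [hbeq]
      exact hu'.2
    funext m
    rcases Nat.even_or_odd m with ⟨n, hn⟩ | ⟨n, hn⟩
    · have hm : m = 2 * n := by omega
      subst hm
      have hd := congrFun hbeq n
      have h1 : u (2 * n) ≤ 1 := hu.1 n
      have h2 : u' (2 * n) ≤ 1 := hu'.1 n
      by_cases hv : u (2 * n) = 1
      · have : decide (u' (2 * n) = 1) = true := by rw [← hd]; simp [hv]
        simp only [decide_eq_true_eq] at this
        rw [hv, this]
      · have : decide (u' (2 * n) = 1) = false := by rw [← hd]; simp [hv]
        simp only [decide_eq_false_iff_not] at this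
        omega
    · have hm : m = 2 * n + 1 := by omega
      subst hm
      rw [congrFun hw1 n, congrFun hw2 n]
  refine ⟨F, hFcl, hsub, ?_⟩
  intro H f hcover
  by_contra hcon
  push_neg at hcon
  have hS : ∀ n : ℕ, ∃ S ∈ Sigma0 (ℕ → Bool) α,
      {x | x ∈ H n ∧ f n x ∈ {v : ℕ → ℕ | v (2 * n) = 1}} = H n ∩ S := by
    intro n
    have hV : IsOpen {v : ℕ → ℕ | v (2 * n) = 1} := by
      have : {v : ℕ → ℕ | v (2 * n) = 1} = (fun v : ℕ → ℕ => v (2 * n)) ⁻¹' {1} := rfl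
      rw [this]
      exact IsOpen.preimage (continuous_apply _) (isOpen_discrete _)
    obtain ⟨S, hSm, hSe⟩ := hcon n _ hV
    exact ⟨S, hSm, hSe⟩
  choose S hSmem hSeq using hS
  have hcode : ∀ n, ∃ e : (ℕ → Bool), {x : ℕ → Bool | (e, x) ∈ NC.W α} = S n := fun n =>
    NC.W_sections_surjective α hα1 hα2 _ (hSmem n)
  choose cc hcc using hcode
  set xstar : ℕ → Bool := fun j => cc (Nat.unpair j).1 (Nat.unpair j).2 with hxstar
  have hsubc : ∀ n, NC.subc xstar n = cc n := by
    intro n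
    funext k
    simp [NC.subc, hxstar, Nat.unpair_pair]
  set ystar : ℕ → Bool := fun n => decide (xstar ∉ NC.Aset α n) with hystar
  have hBst : (xstar, ystar) ∈ NC.Bstar α := by
    intro n
    simp [hystar]
  obtain ⟨w, hw, _⟩ := hC1 _ hBst
  set ustar : ℕ → ℕ := fun m => if m % 2 = 0 then (if ystar (m / 2) then 1 else 0)
    else w (m / 2) with hustar
  have hue : ∀ n, ustar (2 * n) = if ystar n then 1 else 0 := by
    intro n
    simp only [hustar]
    have h2 : (2 * n) % 2 = 0 := by omega
    have h3 : (2 * n) / 2 = n := by omega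
    rw [if_pos h2, h3]
  have huo : ∀ n, ustar (2 * n + 1) = w n := by
    intro n
    simp only [hustar]
    have h2 : ¬ ((2 * n + 1) % 2 = 0) := by omega
    have h3 : (2 * n + 1) / 2 = n := by omega
    rw [if_neg h2, h3]
  have hbit : (fun n => decide (ustar (2 * n) = 1)) = ystar := by
    funext n
    rw [hue n]
    by_cases h : ystar n = true
    · rw [if_pos h, h]
      simp
    · rw [if_neg h]
      simp only [Bool.not_eq_true] at h
      rw [h]
      simp
  have hmemF : (xstar, ustar) ∈ F := by
    constructor
    · intro n
      show ustar (2 * n) ≤ 1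
      rw [hue n]
      by_cases h : ystar n = true <;> simp [h]
    · have hPhi : NC.Phi (xstar, ustar) = ((xstar, ystar), w) := by
        show ((xstar, fun n => decide (ustar (2 * n) = 1)), fun n => ustar (2 * n + 1))
          = ((xstar, ystar), w)
        rw [hbit]
        have hodd : (fun n => ustar (2 * n + 1)) = w := funext huo
        rw [hodd]
      rw [hPhi]
      exact hw
  rw [← hcover] at hmemF
  simp only [Set.mem_iUnion, Set.mem_setOf_eq] at hmemF
  obtain ⟨n0, hHn, hfeq⟩ := hmemF
  -- the punchline
  have hAS : xstar ∈ NC.Aset α n0 ↔ xstar ∈ S n0 := by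
    rw [← hcc n0]
    simp only [Set.mem_setOf_eq, NC.Aset]
    rw [hsubc n0]
  have hVu : f n0 xstar ∈ {v : ℕ → ℕ | v (2 * n0) = 1} ↔ xstar ∉ NC.Aset α n0 := by
    rw [← hfeq]
    show ustar (2 * n0) = 1 ↔ xstar ∉ NC.Aset α n0
    rw [hue n0]
    by_cases h : ystar n0 = true
    · rw [if_pos h]
      simp only [hystar, decide_eq_true_eq] at h
      simp [h]
    · rw [if_neg h]
      have h' : ¬ (xstar ∉ NC.Aset α n0) := by
        intro hc
        exact h (by simp [hystar, hc])
      simp [h']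
  have hiff := Set.ext_iff.mp (hSeq n0) xstar
  simp only [Set.mem_setOf_eq, Set.mem_inter_iff] at hiff
  by_cases hxS : xstar ∈ S n0
  · have hxA : xstar ∈ NC.Aset α n0 := hAS.mpr hxS
    have : ¬ (f n0 xstar ∈ {v : ℕ → ℕ | v (2 * n0) = 1}) := by
      rw [hVu]
      simpa using hxA
    exact this (hiff.mpr ⟨hHn, hxS⟩).2
  · have hxA : xstar ∉ NC.Aset α n0 := fun h => hxS (hAS.mp h)
    have hfV : f n0 xstar ∈ {v : ℕ → ℕ | v (2 * n0) = 1} := hVu.mpr hxA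
    exact hxS (hiff.mp ⟨hHn, hfV⟩).2

/-- For every countable ordinal `α ≥ 1` there is a closed set `F ⊆ 2^ω × ω^ω` with at most
one-point sections which is not a countable union of graphs of `Σ⁰_α`-measurable partial
functions.  A partial function with domain `H n ⊆ 2^ω` is represented by a total function
`f n : 2^ω → ω^ω` restricted to `H n`; its graph is `{(x, f n x) : x ∈ H n}`. -/
theorem no_cover_by_graphs_of_Sigma0_measurable_functions
    (α : Ordinal) (hα1 : 1 ≤ α) (hα2 : α < (Cardinal.aleph 1).ord) :
    ∃ F : Set ((ℕ → Bool) × (ℕ → ℕ)),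
      IsClosed F ∧
      (∀ x : ℕ → Bool, {y : ℕ → ℕ | (x, y) ∈ F}.Subsingleton) ∧
      ∀ (H : ℕ → Set (ℕ → Bool)) (f : ℕ → (ℕ → Bool) → (ℕ → ℕ)),
        (⋃ n, {p : (ℕ → Bool) × (ℕ → ℕ) | p.1 ∈ H n ∧ p.2 = f n p.1}) = F →
        ∃ n : ℕ, ∃ V : Set (ℕ → ℕ), IsOpen V ∧
          ∀ S ∈ Sigma0 (ℕ → Bool) α, {x | x ∈ H n ∧ f n x ∈ V} ≠ H n ∩ S := by
  exact NC_main_aux α hα1 hα2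
end
end

section
/- Let K ⊆ ω^ω × ω^ω be a compact set such that for every x ∈ ω^ω the section K_x contains at most two points. Then there exist sets B₀, B₁ ⊆ ω^ω × ω^ω such that K = B₀ ∪ B₁, each B_i is a G_δ subset of ω^ω × ω^ω, and for every x ∈ ω^ω each section (B_i)_x contains at most one point. -/
open Set

/-- Lexicographic-type comparison of elements of Baire space, parameterized by a relation. -/
private def Lc (c : ℕ → ℕ → Prop) (y z : ℕ → ℕ) : Prop :=
  ∃ n, (∀ m < n, y m = z m) ∧ c (y n) (z n)

private lemma Lc_irrefl (y : ℕ → ℕ) : ¬ Lc (· < ·) y y := by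
  rintro ⟨n, -, h⟩; exact lt_irrefl _ h

private lemma Lc_asymm {y z : ℕ → ℕ} (h1 : Lc (· < ·) y z) (h2 : Lc (· < ·) z y) : False := by
  obtain ⟨n, hn, hlt⟩ := h1
  obtain ⟨m, hm, hlt'⟩ := h2
  rcases lt_trichotomy n m with h | rfl | h
  · exact absurd (hm n h).symm (ne_of_lt hlt)
  · exact absurd hlt' (not_lt.2 hlt.le)
  · exact absurd (hn m h) (ne_of_gt hlt')

private lemma Lc_total {y z : ℕ → ℕ} (h : y ≠ z) :
    Lc (· < ·) y z ∨ Lc (· < ·) z y := by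
  classical
  have hex : ∃ n, y n ≠ z n := by
    by_contra h'; push_neg at h'; exact h (funext h')
  set n := Nat.find hex with hn
  have hns : y n ≠ z n := Nat.find_spec hex
  have hmin : ∀ m < n, y m = z m := fun m hm => by
    have := Nat.find_min hex hm; simpa using this
  rcases lt_or_gt_of_ne hns with h' | h'
  · exact Or.inl ⟨n, hmin, h'⟩
  · exact Or.inr ⟨n, fun m hm => (hmin m hm).symm, h'⟩

private lemma Lc_gt_iff {y z : ℕ → ℕ} : Lc (· > ·) z y ↔ Lc (· < ·) y z := by
  constructor
  · rintro ⟨n, hn, h⟩; exact ⟨n, fun m hm => (hn m hm).symm, h⟩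
  · rintro ⟨n, hn, h⟩; exact ⟨n, fun m hm => (hn m hm).symm, h⟩

/-- The set of pairs `(x,y)` such that the section `K_x` contains an element `z` with
`Lc c z y` has a `Gδ` complement, when `K` is compact. -/
private lemma isGδ_compl_bad (c : ℕ → ℕ → Prop) (K : Set ((ℕ → ℕ) × (ℕ → ℕ)))
    (hK : IsCompact K) :
    IsGδ {p : (ℕ → ℕ) × (ℕ → ℕ) | ∃ z, (p.1, z) ∈ K ∧ Lc c z p.2}ᶜ := by
  classical
  set D : List ℕ × ℕ × ℕ → Set (ℕ → ℕ) := fun q =>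
    {z : ℕ → ℕ | (∀ i < q.1.length, z i = q.1.getD i 0) ∧ z q.1.length = q.2.1} with hD
  set C : List ℕ × ℕ × ℕ → Set (ℕ → ℕ) := fun q =>
    {y : ℕ → ℕ | (∀ i < q.1.length, y i = q.1.getD i 0) ∧ y q.1.length = q.2.2} with hC
  set A : List ℕ × ℕ × ℕ → Set (ℕ → ℕ) := fun q =>
    {x : ℕ → ℕ | ∃ z, (x, z) ∈ K ∧ z ∈ D q} with hA
  set S : List ℕ × ℕ × ℕ → Set ((ℕ → ℕ) × (ℕ → ℕ)) := fun q =>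
    if c q.2.1 q.2.2 then A q ×ˢ C q else ∅ with hS
  have hDclosed : ∀ q, IsClosed (D q) := by
    intro q
    have : D q = (⋂ i ∈ {i | i < q.1.length}, (fun z : ℕ → ℕ => z i) ⁻¹' {q.1.getD i 0}) ∩
        ((fun z : ℕ → ℕ => z q.1.length) ⁻¹' {q.2.1}) := by
      ext z; simp [hD, Set.mem_iInter]
    rw [this]
    exact (isClosed_biInter fun i _ =>
      (isClosed_singleton).preimage (continuous_apply i)).inter
      ((isClosed_singleton).preimage (continuous_apply _))
  have hCclosed : ∀ q, IsClosed (C q) := by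
    intro q
    have : C q = (⋂ i ∈ {i | i < q.1.length}, (fun z : ℕ → ℕ => z i) ⁻¹' {q.1.getD i 0}) ∩
        ((fun z : ℕ → ℕ => z q.1.length) ⁻¹' {q.2.2}) := by
      ext z; simp [hC, Set.mem_iInter]
    rw [this]
    exact (isClosed_biInter fun i _ =>
      (isClosed_singleton).preimage (continuous_apply i)).inter
      ((isClosed_singleton).preimage (continuous_apply _))
  have hAclosed : ∀ q, IsClosed (A q) := by
    intro q
    have himg : A q = Prod.fst '' (K ∩ (Set.univ ×ˢ D q)) := by
      ext x
      constructor
      · rintro ⟨z, hzK, hzD⟩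
        exact ⟨(x, z), ⟨hzK, ⟨trivial, hzD⟩⟩, rfl⟩
      · rintro ⟨⟨x', z⟩, ⟨h1, ⟨-, h2⟩⟩, rfl⟩
        exact ⟨z, h1, h2⟩
    rw [himg]
    exact ((hK.inter_right (isClosed_univ.prod (hDclosed q))).image continuous_fst).isClosed
  have hSclosed : ∀ q, IsClosed (S q) := by
    intro q
    rw [hS]
    dsimp only
    split
    · exact (hAclosed q).prod (hCclosed q)
    · exact isClosed_empty
  have hE : {p : (ℕ → ℕ) × (ℕ → ℕ) | ∃ z, (p.1, z) ∈ K ∧ Lc c z p.2} = ⋃ q, S q := by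
    ext ⟨x, y⟩
    simp only [Set.mem_setOf_eq, Set.mem_iUnion]
    constructor
    · rintro ⟨z, hzK, n, hagree, hc⟩
      refine ⟨(List.ofFn (fun i : Fin n => z i), z n, y n), ?_⟩
      have hlen : (List.ofFn (fun i : Fin n => z i)).length = n := by simp
      rw [hS]
      dsimp only
      rw [if_pos hc]
      constructor
      · refine ⟨z, hzK, ?_, ?_⟩
        · intro i hi
          rw [hlen] at hi
          simp [List.getD, hlen, hi]
        · rw [hlen]
      · refine ⟨?_, ?_⟩
        · intro i hi
          rw [hlen] at hi
          have := hagree i hi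
          simp [List.getD, hlen, hi, ← this]
        · rw [hlen]
    · rintro ⟨q, hq⟩
      rw [hS] at hq
      dsimp only at hq
      by_cases hc : c q.2.1 q.2.2
      · rw [if_pos hc] at hq
        obtain ⟨⟨z, hzK, hz1, hz2⟩, hy1, hy2⟩ := hq
        refine ⟨z, hzK, q.1.length, fun m hm => ?_, ?_⟩
        · have hy1' : y m = q.1.getD m 0 := hy1 m hm
          rw [hz1 m hm, hy1']
        · have hy2' : y q.1.length = q.2.2 := hy2
          rw [hz2, hy2']; exact hc
      · rw [if_neg hc] at hq; exact hq.elim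
  rw [hE, Set.compl_iUnion]
  exact IsGδ.iInter fun q => (hSclosed q).isOpen_compl.isGδ

/-- A compact subset of `ω^ω × ω^ω` all of whose sections contain at most two points can be
decomposed into two `G_δ` sets with at most one-point sections. -/
theorem compact_two_point_sections_split_into_Gdelta_graphs
    (K : Set ((ℕ → ℕ) × (ℕ → ℕ))) (hK : IsCompact K)
    (hsec : ∀ x : ℕ → ℕ, ∃ y z : ℕ → ℕ, {v : ℕ → ℕ | (x, v) ∈ K} ⊆ {y, z}) :
    ∃ B₀ B₁ : Set ((ℕ → ℕ) × (ℕ → ℕ)),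
      K = B₀ ∪ B₁ ∧ IsGδ B₀ ∧ IsGδ B₁ ∧
      (∀ x : ℕ → ℕ, {v : ℕ → ℕ | (x, v) ∈ B₀}.Subsingleton) ∧
      (∀ x : ℕ → ℕ, {v : ℕ → ℕ | (x, v) ∈ B₁}.Subsingleton) := by
  classical
  refine ⟨K ∩ {p | ∃ z, (p.1, z) ∈ K ∧ Lc (· < ·) z p.2}ᶜ,
    K ∩ {p | ∃ z, (p.1, z) ∈ K ∧ Lc (· > ·) z p.2}ᶜ, ?_, ?_, ?_, ?_, ?_⟩
  · ext ⟨x, y⟩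
    constructor
    · intro hxy
      rw [Set.mem_union]
      by_contra hcon
      push_neg at hcon
      obtain ⟨h0, h1⟩ := hcon
      simp only [Set.mem_inter_iff, Set.mem_compl_iff, Set.mem_setOf_eq, not_and, not_not] at h0 h1
      obtain ⟨z, hzK, hzy⟩ := h0 hxy
      obtain ⟨w, hwK, hwy⟩ := h1 hxy
      rw [Lc_gt_iff] at hwy
      -- hzy : z < y, hwy : y < w
      have hzy' : z ≠ y := fun h => Lc_irrefl y (h ▸ hzy)
      have hwy' : w ≠ y := fun h => Lc_irrefl y (h ▸ hwy)
      have hzw : z ≠ w := fun h => Lc_asymm hzy (h ▸ hwy)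
      obtain ⟨a, b, hab⟩ := hsec x
      have hy := hab hxy
      have hz := hab hzK
      have hw := hab hwK
      simp only [Set.mem_insert_iff, Set.mem_singleton_iff] at hy hz hw
      rcases hy with rfl | rfl <;> rcases hz with rfl | rfl <;> rcases hw with h | h <;>
        simp_all
    · rintro (⟨h, -⟩ | ⟨h, -⟩) <;> exact h
  · exact (hK.isClosed.isGδ).inter (isGδ_compl_bad _ K hK)
  · exact (hK.isClosed.isGδ).inter (isGδ_compl_bad _ K hK)
  · intro x y hy y' hy'
    simp only [Set.mem_setOf_eq, Set.mem_inter_iff, Set.mem_compl_iff] at hy hy'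
    by_contra hne
    rcases Lc_total hne with h | h
    · exact hy'.2 ⟨y, hy.1, h⟩
    · exact hy.2 ⟨y', hy'.1, h⟩
  · intro x y hy y' hy'
    simp only [Set.mem_setOf_eq, Set.mem_inter_iff, Set.mem_compl_iff] at hy hy'
    by_contra hne
    rcases Lc_total hne with h | h
    · exact hy.2 ⟨y', hy'.1, Lc_gt_iff.mpr h⟩
    · exact hy'.2 ⟨y, hy.1, Lc_gt_iff.mpr h⟩
end

section
/- Let λ be a countable limit ordinal and ρ < λ an isolated ordinal (i.e., ρ = 0 or ρ is a successor). Then there exist a surjection ⋄ : [ρ,λ) → LIM((ρ,λ]), a map ℓ : [ρ,λ] → ℕ∖{0}, and a map a : LIM((ρ,λ]) × ℕ → [ρ,λ) such that: (a) for every β ∈ [ρ,λ) there exists s ≥ 1 with β < ⋄(β) < ⋄²(β) < … < ⋄^s(β) = λ; (b) for every μ ∈ LIM((ρ,λ]) the sequence k ↦ a(μ,k) is strictly increasing with supremum μ, the preimage ⋄⁻¹({μ}) equals {a(μ,k) : k ∈ ℕ}, ℓ(a(μ,k)) = ℓ(μ) + k for all k ∈ ℕ, ℓ(λ) = 1, and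 ℓ(ρ) = 1; (c) for every β ∈ [ρ,λ) and every ordinal γ with β < γ < ⋄(β) one has ℓ(γ) > ℓ(β) and ⋄(γ) ≤ ⋄(β); (d) for every β ∈ [ρ,λ), ℓ(β+1) = ℓ(β) + 1. -/
section DiamondAuxSection

open Ordinal Set

namespace DiamondAux

structure DLA (β₀ μ : Ordinal) (n : ℕ) (d : Ordinal → Ordinal) (l : Ordinal → ℕ)
    (a : Ordinal → ℕ → Ordinal) : Prop where
  a1 : ∀ β, β₀ ≤ β → β < μ → Order.IsSuccLimit (d β) ∧ β < d β ∧ d β ≤ μ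
  a2 : ∀ ν, Order.IsSuccLimit ν → β₀ < ν → ν ≤ μ → ∃ β, β₀ ≤ β ∧ β < μ ∧ d β = ν
  a3 : ∀ β, β₀ ≤ β → β ≤ μ → n ≤ l β
  a4 : l μ = n
  a5 : ∀ ν, Order.IsSuccLimit ν → β₀ < ν → ν ≤ μ → ∀ k, β₀ ≤ a ν k ∧ a ν k < ν
  a6 : ∀ β, β₀ ≤ β → β < μ →
        ∃ s, 1 ≤ s ∧ (∀ i, i < s → d^[i] β < d^[i+1] β) ∧ d^[s] β = μ
  a7 : ∀ ν, Order.IsSuccLimit ν → β₀ < ν → ν ≤ μ →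
        StrictMono (a ν) ∧ (∀ k, a ν k < ν) ∧ (∀ γ, γ < ν → ∃ k, γ < a ν k) ∧
        (∀ β, β₀ ≤ β → β < μ → (d β = ν ↔ ∃ k, β = a ν k)) ∧
        (∀ k, l (a ν k) = l ν + k)
  a8 : ∀ β γ, β₀ ≤ β → β < μ → β < γ → γ < d β → l β < l γ ∧ d γ ≤ d β
  a9 : ∀ β, β₀ ≤ β → β < μ → l (β + 1) = l β + 1
  a10 : a μ 0 = β₀

/-- the set of limit ordinals below `μ` -/
def limBelow (μ : Ordinal) : Set Ordinal := {γ | Order.IsSuccLimit γ ∧ γ < μ}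

open Classical in
noncomputable def nextc (μ p q : Ordinal) : Ordinal :=
  if (limBelow μ ∩ Ioi (max p q)).Nonempty then sInf (limBelow μ ∩ Ioi (max p q))
  else if (limBelow μ ∩ Ioi p).Nonempty then sSup (limBelow μ)
  else p + 1

noncomputable def cseq (μ β₀ : Ordinal) (x : ℕ → Ordinal) : ℕ → Ordinal
  | 0 => β₀
  | k + 1 => nextc μ (cseq μ β₀ x k) (x k)

lemma sSup_limBelow_mem {μ b : Ordinal} (hne : (limBelow μ).Nonempty) (hb : b < μ)
    (hub : ∀ γ ∈ limBelow μ, γ ≤ b) : sSup (limBelow μ) ∈ limBelow μ := by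
  have hbdd : BddAbove (limBelow μ) := ⟨b, hub⟩
  obtain ⟨γ₀, hγ₀⟩ := id hne
  have hσμ : sSup (limBelow μ) < μ := lt_of_le_of_lt (csSup_le hne hub) hb
  refine ⟨Ordinal.isSuccLimit_iff.mpr ⟨?_, Order.isSuccPrelimit_iff_succ_lt.mpr ?_⟩, hσμ⟩
  · have : 0 < γ₀ := hγ₀.1.bot_lt
    have : 0 < sSup (limBelow μ) := lt_of_lt_of_le this (le_csSup hbdd hγ₀)
    exact this.ne'
  · intro a ha
    obtain ⟨γ, hγ, haγ⟩ := exists_lt_of_lt_csSup hne ha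
    exact lt_of_lt_of_le (hγ.1.succ_lt haγ) (le_csSup hbdd hγ)

lemma nextc_b1 {μ p q : Ordinal} (h1 : (limBelow μ ∩ Ioi (max p q)).Nonempty) :
    nextc μ p q ∈ limBelow μ ∩ Ioi (max p q) := by
  rw [nextc, if_pos h1]; exact csInf_mem h1

lemma nextc_b2 {μ p q : Ordinal} (h1 : ¬(limBelow μ ∩ Ioi (max p q)).Nonempty)
    (h2 : (limBelow μ ∩ Ioi p).Nonempty) : nextc μ p q = sSup (limBelow μ) := by
  rw [nextc, if_neg h1, if_pos h2]

lemma nextc_b3 {μ p q : Ordinal} (h1 : ¬(limBelow μ ∩ Ioi (max p q)).Nonempty)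
    (h2 : ¬(limBelow μ ∩ Ioi p).Nonempty) : nextc μ p q = p + 1 := by
  rw [nextc, if_neg h1, if_neg h2]

lemma nextc_spec {μ p q : Ordinal} (hμ : Order.IsSuccLimit μ) (hp : p < μ) (hq : q < μ) :
    p < nextc μ p q ∧ nextc μ p q < μ ∧
      (nextc μ p q = p + 1 ∨ Order.IsSuccLimit (nextc μ p q)) := by
  by_cases h1 : (limBelow μ ∩ Ioi (max p q)).Nonempty
  · obtain ⟨⟨hl, hlt⟩, hgt⟩ := nextc_b1 (p := p) (q := q) h1
    exact ⟨lt_of_le_of_lt (le_max_left p q) hgt, hlt, Or.inr hl⟩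
  · by_cases h2 : (limBelow μ ∩ Ioi p).Nonempty
    · rw [nextc_b2 h1 h2]
      have hub : ∀ γ ∈ limBelow μ, γ ≤ max p q := by
        intro γ hγ
        by_contra hc
        exact h1 ⟨γ, hγ, not_le.mp hc⟩
      have hmem := sSup_limBelow_mem ⟨h2.choose, h2.choose_spec.1⟩
        (max_lt hp hq) hub
      obtain ⟨γ, hγ, hpγ⟩ := h2
      refine ⟨lt_of_lt_of_le hpγ (le_csSup ⟨max p q, hub⟩ hγ), hmem.2, Or.inr hmem.1⟩
    · rw [nextc_b3 h1 h2]
      refine ⟨lt_add_one p, ?_, Or.inl rfl⟩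
      rw [add_one_eq_succ]
      exact hμ.succ_lt hp

section CSeq

variable {μ β₀ : Ordinal} {x : ℕ → Ordinal}

lemma cseq_lt (hμ : Order.IsSuccLimit μ) (hβ₀ : β₀ < μ) (hx : ∀ k, x k < μ) :
    ∀ k, cseq μ β₀ x k < μ := by
  intro k
  induction k with
  | zero => exact hβ₀
  | succ k ih => exact (nextc_spec hμ ih (hx k)).2.1

lemma cseq_succ_gt (hμ : Order.IsSuccLimit μ) (hβ₀ : β₀ < μ) (hx : ∀ k, x k < μ) (k : ℕ) :
    cseq μ β₀ x k < cseq μ β₀ x (k + 1) :=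
  (nextc_spec hμ (cseq_lt hμ hβ₀ hx k) (hx k)).1

lemma cseq_mono (hμ : Order.IsSuccLimit μ) (hβ₀ : β₀ < μ) (hx : ∀ k, x k < μ) :
    StrictMono (cseq μ β₀ x) :=
  strictMono_nat_of_lt_succ (cseq_succ_gt hμ hβ₀ hx)

lemma cseq_dichotomy (hμ : Order.IsSuccLimit μ) (hβ₀ : β₀ < μ) (hx : ∀ k, x k < μ) (k : ℕ) :
    cseq μ β₀ x (k + 1) = cseq μ β₀ x k + 1 ∨ Order.IsSuccLimit (cseq μ β₀ x (k + 1)) :=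
  (nextc_spec hμ (cseq_lt hμ hβ₀ hx k) (hx k)).2.2

lemma cseq_reach (hμ : Order.IsSuccLimit μ) (hβ₀ : β₀ < μ) (hx : ∀ k, x k < μ)
    (hxc : ∀ β, β < μ → ∃ k, β ≤ x k) :
    ∀ β, β < μ → ∃ k, β ≤ cseq μ β₀ x k := by
  have hclt := cseq_lt hμ hβ₀ hx
  by_cases hcof : ∀ δ, δ < μ → (limBelow μ ∩ Ioi δ).Nonempty
  · intro β hβ
    obtain ⟨k, hk⟩ := hxc β hβ
    have h1 : (limBelow μ ∩ Ioi (max (cseq μ β₀ x k) (x k))).Nonempty :=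
      hcof _ (max_lt (hclt k) (hx k))
    have hgt := (nextc_b1 h1).2
    exact ⟨k + 1, le_of_lt (lt_of_le_of_lt (hk.trans (le_max_right _ _)) hgt)⟩
  · push_neg at hcof
    obtain ⟨δ, hδμ, hδ⟩ := hcof
    have hub : ∀ γ ∈ limBelow μ, γ ≤ δ := by
      intro γ hγ
      by_contra hc
      exact absurd (Set.eq_empty_iff_forall_notMem.mp hδ γ) (by
        simp only [Set.mem_inter_iff, not_and, Set.mem_Ioi]
        intro _
        exact absurd (not_le.mp hc) (by simp [hγ] at *; tauto))
    by_cases hS : (limBelow μ).Nonempty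
    · set σ := sSup (limBelow μ) with hσdef
      have hσ : σ ∈ limBelow μ := sSup_limBelow_mem hS hδμ hub
      have hσub : ∀ γ ∈ limBelow μ, γ ≤ σ := fun γ hγ => le_csSup ⟨δ, hub⟩ hγ
      have hstep3 : ∀ k, σ ≤ cseq μ β₀ x k → cseq μ β₀ x (k + 1) = cseq μ β₀ x k + 1 := by
        intro k hk
        apply nextc_b3
        · rintro ⟨γ, hγ, hγgt⟩
          have : γ ≤ σ := hσub γ hγ
          exact absurd this (not_le.mpr
            (lt_of_le_of_lt (hk.trans (le_max_left _ _)) hγgt))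
        · rintro ⟨γ, hγ, hγgt⟩
          exact absurd (hσub γ hγ) (not_le.mpr (lt_of_le_of_lt hk hγgt))
      have hk0 : ∃ k, σ ≤ cseq μ β₀ x k := by
        by_contra hc
        push_neg at hc
        have hxσ : ∀ k, x k < σ := by
          intro k
          by_cases h1 : (limBelow μ ∩ Ioi (max (cseq μ β₀ x k) (x k))).Nonempty
          · have hgt := (nextc_b1 h1).2
            exact lt_of_le_of_lt (le_max_right _ _) (lt_trans hgt (hc (k + 1)))
          · by_cases h2 : (limBelow μ ∩ Ioi (cseq μ β₀ x k)).Nonempty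
            · have heq : cseq μ β₀ x (k + 1) = σ := nextc_b2 h1 h2
              exact absurd (hc (k + 1)) (by rw [heq]; exact lt_irrefl σ)
            · exact absurd ⟨σ, hσ, hc k⟩ h2
        obtain ⟨k, hk⟩ := hxc σ hσ.2
        exact absurd (hxσ k) (not_lt.mpr hk)
      obtain ⟨k₀, hk₀⟩ := hk0
      have htail : ∀ j : ℕ, σ + j ≤ cseq μ β₀ x (k₀ + j) := by
        intro j
        induction j with
        | zero => simpa using hk₀
        | succ j ih =>
          have hge : σ ≤ cseq μ β₀ x (k₀ + j) :=
            le_trans (le_add_of_nonneg_right (zero_le (a := (j : Ordinal)))) ih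
          have : cseq μ β₀ x (k₀ + (j + 1)) = cseq μ β₀ x (k₀ + j) + 1 := hstep3 _ hge
          rw [this]
          have : σ + ((j : ℕ) + 1 : ℕ) = (σ + j) + 1 := by push_cast; rw [add_assoc]
          rw [this]
          exact add_le_add_left ih 1
      have hbound : ∀ β, β < μ → ∃ j : ℕ, β ≤ σ + j := by
        intro β
        induction β using Ordinal.induction with
        | h β IH =>
          intro hβ
          rcases le_or_gt β σ with h | h
          · exact ⟨0, by simpa using h⟩
          · rcases Ordinal.zero_or_succ_or_isSuccLimit β with rfl | ⟨τ, rfl⟩ | hlim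
            · exact ⟨0, by simpa using le_of_lt hσ.1.bot_lt⟩
            · obtain ⟨j, hj⟩ := IH τ (Order.lt_succ τ) (lt_trans (Order.lt_succ τ) hβ)
              refine ⟨j + 1, ?_⟩
              have : σ + ((j : ℕ) + 1 : ℕ) = (σ + j) + 1 := by push_cast; rw [add_assoc]
              rw [this, ← add_one_eq_succ]
              exact add_le_add_left hj 1
            · exact absurd (hσub β ⟨hlim, hβ⟩) (not_le.mpr h)
      intro β hβ
      obtain ⟨j, hj⟩ := hbound β hβ
      exact ⟨k₀ + j, hj.trans (htail j)⟩
    · have hstep : ∀ k, cseq μ β₀ x (k + 1) = cseq μ β₀ x k + 1 := by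
        intro k
        apply nextc_b3 <;> · rintro ⟨γ, hγ, _⟩; exact hS ⟨γ, hγ⟩
      have hck : ∀ k : ℕ, cseq μ β₀ x k = β₀ + k := by
        intro k
        induction k with
        | zero => simp [cseq]
        | succ k ih =>
          rw [hstep k, ih]
          push_cast
          rw [add_assoc]
      have hbound : ∀ β, β < μ → ∃ j : ℕ, β ≤ β₀ + j := by
        intro β
        induction β using Ordinal.induction with
        | h β IH =>
          intro hβ
          rcases le_or_gt β β₀ with h | h
          · exact ⟨0, by simpa using h⟩
          · rcases Ordinal.zero_or_succ_or_isSuccLimit β with rfl | ⟨τ, rfl⟩ | hlim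
            · exact ⟨0, by simpa using le_of_lt (lt_of_le_of_lt (Ordinal.zero_le β₀) h)⟩
            · obtain ⟨j, hj⟩ := IH τ (Order.lt_succ τ) (lt_trans (Order.lt_succ τ) hβ)
              refine ⟨j + 1, ?_⟩
              have : β₀ + ((j : ℕ) + 1 : ℕ) = (β₀ + j) + 1 := by push_cast; rw [add_assoc]
              rw [this, ← add_one_eq_succ]
              exact add_le_add_left hj 1
            · exact absurd ⟨hlim, hβ⟩ fun hmem => hS ⟨β, hmem⟩
      intro β hβ
      obtain ⟨j, hj⟩ := hbound β hβ
      exact ⟨j, by rw [hck j]; exact hj⟩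

end CSeq

lemma chain_mono {f : ℕ → Ordinal} {s : ℕ} (h : ∀ i, i < s → f i < f (i + 1)) :
    ∀ i j, i ≤ j → j ≤ s → f i ≤ f j := by
  intro i j
  induction j with
  | zero =>
    intro hij _
    rw [Nat.le_zero.mp hij]
  | succ j ih =>
    intro hij hjs
    rcases eq_or_lt_of_le hij with h' | h'
    · rw [h']
    · exact le_trans (ih (Nat.lt_succ_iff.mp h') (le_trans (Nat.le_succ j) hjs))
        (le_of_lt (h j (Nat.lt_of_succ_le hjs)))

lemma step (μ : Ordinal) (hμ : Order.IsSuccLimit μ) (hctble : μ < (Cardinal.aleph 1).ord)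
    (IH : ∀ μ', μ' < μ → Order.IsSuccLimit μ' → μ' < (Cardinal.aleph 1).ord →
      ∀ β₀', β₀' < μ' → ∀ n' : ℕ, ∃ d l a, DLA β₀' μ' n' d l a)
    (β₀ : Ordinal) (hβ₀ : β₀ < μ) (n : ℕ) :
    ∃ d l a, DLA β₀ μ n d l a := by
  classical
  -- a cofinal enumeration of `Iio μ`
  have hcount : Countable (Set.Iio μ) := by
    rw [← Cardinal.mk_le_aleph0_iff, Ordinal.mk_Iio_ordinal, Cardinal.lift_le_aleph0]
    have h := Cardinal.lt_ord.mp hctble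
    rwa [← Cardinal.succ_aleph0, Order.lt_succ_iff] at h
  have hne : Nonempty (Set.Iio μ) := ⟨⟨0, hμ.bot_lt⟩⟩
  obtain ⟨f, hf⟩ := exists_surjective_nat (Set.Iio μ)
  set x : ℕ → Ordinal := fun k => (f k : Ordinal) with hx_def
  have hx : ∀ k, x k < μ := fun k => (f k).2
  have hxc : ∀ β, β < μ → ∃ k, β ≤ x k := by
    intro β hβ
    obtain ⟨k, hk⟩ := hf ⟨β, hβ⟩
    exact ⟨k, le_of_eq (congrArg Subtype.val hk).symm⟩
  set c : ℕ → Ordinal := cseq μ β₀ x with hc_def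
  have hclt : ∀ k, c k < μ := cseq_lt hμ hβ₀ hx
  have hcmono : StrictMono c := cseq_mono hμ hβ₀ hx
  have hc0 : c 0 = β₀ := rfl
  have hble : ∀ k, β₀ ≤ c k := fun k => hc0 ▸ hcmono.monotone (Nat.zero_le k)
  have hdich : ∀ k, c (k + 1) = c k + 1 ∨ Order.IsSuccLimit (c (k + 1)) := cseq_dichotomy hμ hβ₀ hx
  have hreach : ∀ β, β < μ → ∃ k, β ≤ c k := cseq_reach hμ hβ₀ hx hxc
  have hsle : ∀ p q : Ordinal, p < q → p + 1 ≤ q := by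
    intro p q h; rw [add_one_eq_succ]; exact Order.succ_le_of_lt h
  have hsucclt : ∀ k, Order.IsSuccLimit (c (k + 1)) → c k + 1 < c (k + 1) := by
    intro k hl; rw [add_one_eq_succ]; exact hl.succ_lt (hcmono (Nat.lt_succ_self k))
  -- inner packs
  have hsubex : ∀ k : ℕ, ∃ dk lk ak, Order.IsSuccLimit (c (k + 1)) →
      DLA (c k + 1) (c (k + 1)) (n + (k + 1)) dk lk ak := by
    intro k
    by_cases hPk : Order.IsSuccLimit (c (k + 1))
    · obtain ⟨dk, lk, ak, h⟩ := IH (c (k + 1)) (hclt (k + 1)) hPk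
        (lt_trans (hclt (k + 1)) hctble) (c k + 1) (hsucclt k hPk) (n + (k + 1))
      exact ⟨dk, lk, ak, fun _ => h⟩
    · exact ⟨id, fun _ => 0, fun _ _ => 0, fun h => absurd h hPk⟩
  choose D L A hDLA using hsubex
  -- block index functions
  have hKex : ∀ β, β < μ → ∃ k, β < c (k + 1) := by
    intro β hβ
    obtain ⟨k, hk⟩ := hreach β hβ
    exact ⟨k, lt_of_le_of_lt hk (hcmono (Nat.lt_succ_self k))⟩
  set K : Ordinal → ℕ := fun β => if h : ∃ k, β < c (k + 1) then Nat.find h else 0 with hK_def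
  have hKlt : ∀ β, β < μ → β < c (K β + 1) := by
    intro β hβ
    have h := hKex β hβ
    simp only [hK_def, dif_pos h]
    exact Nat.find_spec h
  have hKle : ∀ β, β₀ ≤ β → β < μ → c (K β) ≤ β := by
    intro β hβ0 hβ
    have h := hKex β hβ
    simp only [hK_def, dif_pos h]
    cases hn : Nat.find h with
    | zero => exact hc0 ▸ hβ0
    | succ m =>
      have hmin := Nat.find_min h (m := m) (by omega)
      exact not_lt.mp hmin
  have hKuniq : ∀ β k, c k ≤ β → β < c (k + 1) → K β = k := by
    intro β k h1 h2
    have hβ : β < μ := lt_trans h2 (hclt (k + 1))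
    have h := hKex β hβ
    simp only [hK_def, dif_pos h]
    refine le_antisymm (Nat.find_min' h h2) ?_
    by_contra hc'
    push_neg at hc'
    have hsp := Nat.find_spec h
    have : β < c k := lt_of_lt_of_le hsp (hcmono.monotone (Nat.succ_le_of_lt hc'))
    exact absurd h1 (not_le.mpr this)
  have hK'ex : ∀ ν, β₀ < ν → ν < μ → ∃ k, ν ≤ c (k + 1) := by
    intro ν hν0 hν
    obtain ⟨k, hk⟩ := hreach ν hν
    cases k with
    | zero => exact ⟨0, le_trans hk (le_of_lt (hcmono (Nat.lt_succ_self 0)))⟩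
    | succ m => exact ⟨m, hk⟩
  set K' : Ordinal → ℕ := fun ν => if h : ∃ k, ν ≤ c (k + 1) then Nat.find h else 0 with hK'_def
  have hK'le : ∀ ν, β₀ < ν → ν < μ → ν ≤ c (K' ν + 1) := by
    intro ν hν0 hν
    have h := hK'ex ν hν0 hν
    simp only [hK'_def, dif_pos h]
    exact Nat.find_spec h
  have hK'gt : ∀ ν, β₀ < ν → ν < μ → c (K' ν) < ν := by
    intro ν hν0 hν
    have h := hK'ex ν hν0 hν
    simp only [hK'_def, dif_pos h]
    cases hn : Nat.find h with
    | zero => exact hc0 ▸ hν0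
    | succ m =>
      have hmin := Nat.find_min h (m := m) (by omega)
      exact not_le.mp hmin
  have hK'uniq : ∀ ν k, c k < ν → ν ≤ c (k + 1) → K' ν = k := by
    intro ν k h1 h2
    have hν0 : β₀ < ν := lt_of_le_of_lt (hble k) h1
    have hν : ν < μ := lt_of_le_of_lt h2 (hclt (k + 1))
    have h := hK'ex ν hν0 hν
    simp only [hK'_def, dif_pos h]
    refine le_antisymm (Nat.find_min' h h2) ?_
    by_contra hc'
    push_neg at hc'
    have hsp := Nat.find_spec h
    have : ν ≤ c k := le_trans hsp (hcmono.monotone (Nat.succ_le_of_lt hc'))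
    exact absurd h1 (not_lt.mpr this)
  -- the glued functions
  set d : Ordinal → Ordinal := fun β => if β = c (K β) then μ else D (K β) β with hd_def
  set l : Ordinal → ℕ := fun β =>
    if β < μ then (if β = c (K β) then n + K β else L (K β) β) else n with hl_def
  set a : Ordinal → ℕ → Ordinal := fun ν =>
    if β₀ < ν ∧ ν < μ then A (K' ν) ν else c with ha_def
  have hKc : ∀ k, K (c k) = k := fun k => hKuniq _ k le_rfl (hcmono (Nat.lt_succ_self k))
  have d_seq : ∀ k, d (c k) = μ := by
    intro k
    rw [hd_def]
    simp [hKc k]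
  have d_int : ∀ k β, c k < β → β < c (k + 1) → d β = D k β := by
    intro k β h1 h2
    have hKβ : K β = k := hKuniq β k (le_of_lt h1) h2
    rw [hd_def]
    simp [hKβ, ne_of_gt h1]
  have l_top : l μ = n := by rw [hl_def]; simp
  have l_seq : ∀ k, l (c k) = n + k := by
    intro k
    rw [hl_def]
    simp [hKc k, hclt k]
  have l_int : ∀ k β, Order.IsSuccLimit (c (k + 1)) → c k < β → β ≤ c (k + 1) → l β = L k β := by
    intro k β hPk h1 h2
    rcases eq_or_lt_of_le h2 with heq | h2'
    · rw [heq, l_seq (k + 1), (hDLA k hPk).a4]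
    · have hβμ : β < μ := lt_trans h2' (hclt (k + 1))
      have hKβ : K β = k := hKuniq β k (le_of_lt h1) h2'
      rw [hl_def]
      simp [hβμ, hKβ, ne_of_gt h1]
  have a_top : a μ = c := by rw [ha_def]; simp
  have a_int : ∀ k ν, c k < ν → ν ≤ c (k + 1) → a ν = A k ν := by
    intro k ν h1 h2
    have hν : ν < μ := lt_of_le_of_lt h2 (hclt (k + 1))
    have h0 : β₀ < ν := lt_of_le_of_lt (hble k) h1
    have hK'ν : K' ν = k := hK'uniq ν k h1 h2
    rw [ha_def]
    simp [h0, hν, hK'ν]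
  have hPint : ∀ k β, c k < β → β < c (k + 1) → Order.IsSuccLimit (c (k + 1)) := by
    intro k β h1 h2
    rcases hdich k with h | h
    · rw [h, add_one_eq_succ, Order.lt_succ_iff] at h2
      exact absurd h1 (not_lt.mpr h2)
    · exact h
  have hPlim : ∀ k ν, Order.IsSuccLimit ν → c k < ν → ν ≤ c (k + 1) → Order.IsSuccLimit (c (k + 1)) := by
    intro k ν hν h1 h2
    rcases eq_or_lt_of_le h2 with heq | h2'
    · exact heq ▸ hν
    · exact hPint k ν h1 h2'
  refine ⟨d, l, a, ?_, ?_, ?_, ?_, ?_, ?_, ?_, ?_, ?_, ?_⟩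
  -- a1
  · intro β hβ0 hβ
    by_cases hs : β = c (K β)
    · have hdβ : d β = μ := (congrArg d hs).trans (d_seq (K β))
      exact ⟨hdβ ▸ hμ, hdβ ▸ hβ, hdβ ▸ le_rfl⟩
    · have h1 : c (K β) < β := lt_of_le_of_ne (hKle β hβ0 hβ) (fun h => hs h.symm)
      have h2 : β < c (K β + 1) := hKlt β hβ
      have hPk := hPint (K β) β h1 h2
      have hdβ : d β = D (K β) β := d_int (K β) β h1 h2
      obtain ⟨hlim, hlt, hle⟩ := (hDLA (K β) hPk).a1 β (hsle _ _ h1) h2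
      exact ⟨hdβ ▸ hlim, hdβ ▸ hlt, hdβ ▸ le_trans hle (le_of_lt (hclt (K β + 1)))⟩
  -- a2
  · intro ν hν hν0 hνμ
    rcases eq_or_lt_of_le hνμ with heq | hνlt
    · exact ⟨β₀, le_rfl, hβ₀, by rw [← hc0, d_seq 0, heq]⟩
    · have h1 : c (K' ν) < ν := hK'gt ν hν0 hνlt
      have h2 : ν ≤ c (K' ν + 1) := hK'le ν hν0 hνlt
      have hPk := hPlim (K' ν) ν hν h1 h2
      have ip := hDLA (K' ν) hPk
      rcases eq_or_lt_of_le h2 with heq | hlt2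
      · refine ⟨c (K' ν) + 1, le_trans (hble (K' ν)) (le_of_lt (lt_add_one _)),
          lt_trans (hsucclt (K' ν) hPk) (hclt (K' ν + 1)), ?_⟩
        have hd1 : d (c (K' ν) + 1) = D (K' ν) (c (K' ν) + 1) :=
          d_int (K' ν) _ (lt_add_one _) (hsucclt (K' ν) hPk)
        have hpre := (ip.a7 (c (K' ν + 1)) hPk (hsucclt (K' ν) hPk) le_rfl).2.2.2.1
          (c (K' ν) + 1) le_rfl (hsucclt (K' ν) hPk)
        have hval : D (K' ν) (c (K' ν) + 1) = c (K' ν + 1) := hpre.mpr ⟨0, ip.a10.symm⟩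
        rw [hd1, hval]
        exact heq.symm
      · have hbase : c (K' ν) + 1 < ν := by
          rw [add_one_eq_succ]; exact hν.succ_lt h1
        obtain ⟨β, hβ1, hβ2, hβ3⟩ := ip.a2 ν hν hbase (le_of_lt hlt2)
        refine ⟨β, le_trans (hble (K' ν)) (le_trans (le_of_lt (lt_add_one _)) hβ1),
          lt_trans hβ2 (hclt (K' ν + 1)), ?_⟩
        rw [d_int (K' ν) β (lt_of_lt_of_le (lt_add_one _) hβ1) hβ2]
        exact hβ3
  -- a3
  · intro β hβ0 hβle
    rcases eq_or_lt_of_le hβle with heq | hβ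
    · rw [heq, l_top]
    · by_cases hs : β = c (K β)
      · have : l β = n + K β := (congrArg l hs).trans (l_seq (K β))
        omega
      · have h1 : c (K β) < β := lt_of_le_of_ne (hKle β hβ0 hβ) (fun h => hs h.symm)
        have h2 : β < c (K β + 1) := hKlt β hβ
        have hPk := hPint (K β) β h1 h2
        have hlβ : l β = L (K β) β := l_int (K β) β hPk h1 (le_of_lt h2)
        have := (hDLA (K β) hPk).a3 β (hsle _ _ h1) (le_of_lt h2)
        omega
  -- a4
  · exact l_top
  -- a5
  · intro ν hν hν0 hνμ k
    rcases eq_or_lt_of_le hνμ with heq | hνlt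
    · rw [heq, a_top]
      exact ⟨hble k, heq ▸ hclt k⟩
    · have h1 : c (K' ν) < ν := hK'gt ν hν0 hνlt
      have h2 : ν ≤ c (K' ν + 1) := hK'le ν hν0 hνlt
      have hPk := hPlim (K' ν) ν hν h1 h2
      have ip := hDLA (K' ν) hPk
      have hbase : c (K' ν) + 1 < ν := by rw [add_one_eq_succ]; exact hν.succ_lt h1
      rw [a_int (K' ν) ν h1 h2]
      obtain ⟨ha1, ha2⟩ := ip.a5 ν hν hbase h2 k
      exact ⟨le_trans (hble (K' ν)) (le_trans (le_of_lt (lt_add_one _)) ha1), ha2⟩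
  -- a6
  · intro β hβ0 hβ
    by_cases hs : β = c (K β)
    · refine ⟨1, le_rfl, ?_, ?_⟩
      · intro i hi
        interval_cases i
        show β < d β
        rw [show d β = μ from (congrArg d hs).trans (d_seq (K β))]
        exact hβ
      · show d β = μ
        exact (congrArg d hs).trans (d_seq (K β))
    · have h1 : c (K β) < β := lt_of_le_of_ne (hKle β hβ0 hβ) (fun h => hs h.symm)
      have h2 : β < c (K β + 1) := hKlt β hβ
      have hPk := hPint (K β) β h1 h2
      have ip := hDLA (K β) hPk
      obtain ⟨s, hs1, hinc, htop⟩ := ip.a6 β (hsle _ _ h1) h2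
      have hqmono := chain_mono (f := fun i => (D (K β))^[i] β) (s := s) hinc
      have hqlow : ∀ i, i ≤ s → c (K β) < (D (K β))^[i] β := by
        intro i hi
        exact lt_of_lt_of_le h1 (hqmono 0 i (Nat.zero_le i) hi)
      have hqhigh : ∀ i, i < s → (D (K β))^[i] β < c (K β + 1) := by
        intro i hi
        have h' := lt_of_lt_of_le (hinc i hi) (hqmono (i + 1) s hi le_rfl)
        rwa [htop] at h'
      have hkey : ∀ i, i ≤ s → d^[i] β = (D (K β))^[i] β := by
        intro i hi
        induction i with
        | zero => rfl
        | succ i ihi =>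
          rw [Function.iterate_succ_apply', Function.iterate_succ_apply',
            ihi (le_trans (Nat.le_succ i) hi)]
          exact d_int (K β) _ (hqlow i (le_of_lt (Nat.lt_of_succ_le hi)))
            (hqhigh i (Nat.lt_of_succ_le hi))
      refine ⟨s + 1, le_trans hs1 (Nat.le_succ s), ?_, ?_⟩
      · intro i hi
        rcases Nat.lt_succ_iff_lt_or_eq.mp hi with hi' | heq
        · rw [hkey i (le_of_lt hi'), hkey (i + 1) hi']
          exact hinc i hi'
        · subst heq
          rw [Function.iterate_succ_apply', hkey i le_rfl, htop, d_seq (K β + 1)]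
          exact hclt (K β + 1)
      · rw [Function.iterate_succ_apply', hkey s le_rfl, htop, d_seq (K β + 1)]
  -- a7
  · intro ν hν hν0 hνμ
    rcases eq_or_lt_of_le hνμ with heq | hνlt
    · subst heq
      rw [a_top]
      refine ⟨hcmono, hclt, ?_, ?_, ?_⟩
      · intro γ hγ
        obtain ⟨k, hk⟩ := hreach γ hγ
        exact ⟨k + 1, lt_of_le_of_lt hk (hcmono (Nat.lt_succ_self k))⟩
      · intro β hβ0 hβ
        constructor
        · intro hdβ
          by_cases hs : β = c (K β)
          · exact ⟨K β, hs⟩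
          · exfalso
            have h1 : c (K β) < β := lt_of_le_of_ne (hKle β hβ0 hβ) (fun h => hs h.symm)
            have h2 : β < c (K β + 1) := hKlt β hβ
            have hPk := hPint (K β) β h1 h2
            have hle := ((hDLA (K β) hPk).a1 β (hsle _ _ h1) h2).2.2
            rw [d_int (K β) β h1 h2] at hdβ
            rw [hdβ] at hle
            exact absurd hle (not_le.mpr (hclt (K β + 1)))
        · rintro ⟨k, rfl⟩
          exact d_seq k
      · intro k
        rw [l_seq k, l_top]
    · have h1 : c (K' ν) < ν := hK'gt ν hν0 hνlt
      have h2 : ν ≤ c (K' ν + 1) := hK'le ν hν0 hνlt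
      have hPk := hPlim (K' ν) ν hν h1 h2
      have ip := hDLA (K' ν) hPk
      have hbase : c (K' ν) + 1 < ν := by rw [add_one_eq_succ]; exact hν.succ_lt h1
      have haν : a ν = A (K' ν) ν := a_int (K' ν) ν h1 h2
      obtain ⟨ism, iltν, icof, ipre, ilvl⟩ := ip.a7 ν hν hbase h2
      rw [haν]
      refine ⟨ism, iltν, icof, ?_, ?_⟩
      · intro β hβ0 hβ
        by_cases hs : β = c (K β)
        · constructor
          · intro hdβ
            rw [hs, d_seq (K β)] at hdβ
            exact absurd hdβ.symm (ne_of_lt hνlt)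
          · rintro ⟨j, hj⟩
            exfalso
            have hA := ip.a5 ν hν hbase h2 j
            have hβ1 : c (K' ν) < β := by
              rw [hj]; exact lt_of_lt_of_le (lt_add_one _) hA.1
            have hβ2 : β < c (K' ν + 1) := by
              rw [hj]; exact lt_of_lt_of_le hA.2 h2
            have hKβ : K β = K' ν := hKuniq β (K' ν) (le_of_lt hβ1) hβ2
            rw [hKβ] at hs
            exact absurd hs (ne_of_gt hβ1)
        · have hm1 : c (K β) < β := lt_of_le_of_ne (hKle β hβ0 hβ) (fun h => hs h.symm)
          have hm2 : β < c (K β + 1) := hKlt β hβ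
          have hPm := hPint (K β) β hm1 hm2
          have ipm := hDLA (K β) hPm
          have hdβ : d β = D (K β) β := d_int (K β) β hm1 hm2
          rcases lt_trichotomy (K β) (K' ν) with hmk | hmk | hmk
          · have hdle : D (K β) β ≤ c (K β + 1) := (ipm.a1 β (hsle _ _ hm1) hm2).2.2
            have hdlt : d β < ν := by
              rw [hdβ]
              exact lt_of_le_of_lt
                (le_trans hdle (hcmono.monotone (Nat.succ_le_of_lt hmk))) h1
            constructor
            · intro h; exact absurd h (ne_of_lt hdlt)
            · rintro ⟨j, hj⟩
              exfalso
              have hA := ip.a5 ν hν hbase h2 j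
              have : β < A (K' ν) ν j :=
                lt_of_lt_of_le
                  (lt_of_le_of_lt (le_trans (le_of_lt hm2)
                    (hcmono.monotone (Nat.succ_le_of_lt hmk))) (lt_add_one _)) hA.1
              rw [← hj] at this
              exact lt_irrefl β this
          · rw [hdβ, hmk]
            exact ipre β (by rw [← hmk]; exact hsle _ _ hm1) (by rw [← hmk]; exact hm2)
          · have hge : ν ≤ c (K β) := le_trans h2 (hcmono.monotone (Nat.succ_le_of_lt hmk))
            have hdgt : ν < d β := by
              rw [hdβ]
              exact lt_of_le_of_lt (le_trans hge (le_of_lt hm1))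
                (ipm.a1 β (hsle _ _ hm1) hm2).2.1
            constructor
            · intro h; exact absurd h.symm (ne_of_lt hdgt)
            · rintro ⟨j, hj⟩
              exfalso
              have hA := ip.a5 ν hν hbase h2 j
              have : A (K' ν) ν j < β := lt_of_lt_of_le hA.2 (le_trans hge (le_of_lt hm1))
              rw [← hj] at this
              exact lt_irrefl β this
      · intro j
        have hA := ip.a5 ν hν hbase h2 j
        have hlA : l (A (K' ν) ν j) = L (K' ν) (A (K' ν) ν j) :=
          l_int (K' ν) _ hPk (lt_of_lt_of_le (lt_add_one _) hA.1)
            (le_trans (le_of_lt hA.2) h2)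
        have hlν : l ν = L (K' ν) ν := l_int (K' ν) ν hPk h1 h2
        rw [hlA, hlν]
        exact ilvl j
  -- a8
  · intro β γ hβ0 hβ hβγ hγd
    by_cases hs : β = c (K β)
    · have hdβ : d β = μ := by rw [hs]; exact d_seq (K β)
      rw [hdβ] at hγd
      have hlβ : l β = n + K β := (congrArg l hs).trans (l_seq (K β))
      have hdμ : d β = μ := hdβ
      by_cases hsγ : γ = c (K γ)
      · have hij : K β < K γ := by
          have h := hβγ
          rw [hs, hsγ] at h
          exact hcmono.lt_iff_lt.mp h
        have hlγ : l γ = n + K γ := (congrArg l hsγ).trans (l_seq (K γ))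
        constructor
        · rw [hlβ, hlγ]; omega
        · rw [hdμ, show d γ = μ from (congrArg d hsγ).trans (d_seq (K γ))]
      · have hγ0 : β₀ ≤ γ := le_trans hβ0 (le_of_lt hβγ)
        have hm1 : c (K γ) < γ := lt_of_le_of_ne (hKle γ hγ0 hγd) (fun h => hsγ h.symm)
        have hm2 : γ < c (K γ + 1) := hKlt γ hγd
        have hPm := hPint (K γ) γ hm1 hm2
        have ipm := hDLA (K γ) hPm
        have hKm : K β ≤ K γ := by
          have : c (K β) < c (K γ + 1) := lt_trans (hs ▸ hβγ) hm2
          exact Nat.lt_succ_iff.mp (hcmono.lt_iff_lt.mp this)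
        constructor
        · have hlγ : l γ = L (K γ) γ := l_int (K γ) γ hPm hm1 (le_of_lt hm2)
          have h3 := ipm.a3 γ (hsle _ _ hm1) (le_of_lt hm2)
          rw [hlβ, hlγ]; omega
        · rw [hdμ, d_int (K γ) γ hm1 hm2]
          exact le_trans (ipm.a1 γ (hsle _ _ hm1) hm2).2.2 (le_of_lt (hclt (K γ + 1)))
    · have hm1 : c (K β) < β := lt_of_le_of_ne (hKle β hβ0 hβ) (fun h => hs h.symm)
      have hm2 : β < c (K β + 1) := hKlt β hβ
      have hPm := hPint (K β) β hm1 hm2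
      have ipm := hDLA (K β) hPm
      have hdβ : d β = D (K β) β := d_int (K β) β hm1 hm2
      have hdle : D (K β) β ≤ c (K β + 1) := (ipm.a1 β (hsle _ _ hm1) hm2).2.2
      rw [hdβ] at hγd
      have hγlt : γ < c (K β + 1) := lt_of_lt_of_le hγd hdle
      have hγgt : c (K β) < γ := lt_trans hm1 hβγ
      have h8 := ipm.a8 β γ (hsle _ _ hm1) hm2 hβγ hγd
      constructor
      · rw [l_int (K β) β hPm hm1 (le_of_lt hm2), l_int (K β) γ hPm hγgt (le_of_lt hγlt)]
        exact h8.1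
      · rw [hdβ, d_int (K β) γ hγgt hγlt]
        exact h8.2
  -- a9
  · intro β hβ0 hβ
    by_cases hs : β = c (K β)
    · rcases hdich (K β) with h | hPk
      · have h1 : β + 1 = c (K β + 1) := by
          rw [h]; exact congrArg (· + 1) hs
        have h2 : l (β + 1) = n + (K β + 1) := (congrArg l h1).trans (l_seq (K β + 1))
        have h3 : l β = n + K β := (congrArg l hs).trans (l_seq (K β))
        omega
      · have ipk := hDLA (K β) hPk
        have hβ1eq : β + 1 = c (K β) + 1 := congrArg (· + 1) hs
        have hlβ1 : l (β + 1) = L (K β) (c (K β) + 1) := by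
          rw [hβ1eq]
          exact l_int (K β) _ hPk (lt_add_one _) (le_of_lt (hsucclt (K β) hPk))
        have hval : L (K β) (c (K β) + 1) = n + (K β + 1) := by
          have h10 := ipk.a10
          have hlvl := (ipk.a7 (c (K β + 1)) hPk (hsucclt (K β) hPk) le_rfl).2.2.2.2 0
          rw [h10] at hlvl
          rw [hlvl, ipk.a4]
          omega
        have h3 : l β = n + K β := (congrArg l hs).trans (l_seq (K β))
        omega
    · have hm1 : c (K β) < β := lt_of_le_of_ne (hKle β hβ0 hβ) (fun h => hs h.symm)
      have hm2 : β < c (K β + 1) := hKlt β hβ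
      have hPm := hPint (K β) β hm1 hm2
      have ipm := hDLA (K β) hPm
      have h9 := ipm.a9 β (hsle _ _ hm1) hm2
      rw [l_int (K β) (β + 1) hPm (lt_trans hm1 (lt_add_one β)) (hsle _ _ hm2),
        l_int (K β) β hPm hm1 (le_of_lt hm2)]
      exact h9
  -- a10
  · rw [a_top]
    exact hc0

lemma main : ∀ μ : Ordinal, Order.IsSuccLimit μ → μ < (Cardinal.aleph 1).ord →
    ∀ β₀, β₀ < μ → ∀ n : ℕ, ∃ d l a, DLA β₀ μ n d l a := by
  intro μ
  induction μ using Ordinal.induction with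
  | h μ IH =>
    intro hμ hct β₀ hβ₀ n
    exact step μ hμ hct (fun μ' h1 h2 h3 => IH μ' h1 h2 h3) β₀ hβ₀ n

end DiamondAux

end DiamondAuxSection


/-- Auxiliary structure of the ordinal interval `[ρ, λ]` (Lemma on `⋄`, `ℓ`, `a`):
for a countable limit ordinal `λ` and an isolated ordinal `ρ < λ` there are a surjection
`d : [ρ,λ) → LIM((ρ,λ])`, a map `l : [ρ,λ] → ℕ∖{0}` and a map
`a : LIM((ρ,λ]) × ℕ → [ρ,λ)` satisfying (a)–(d). -/
theorem diamond_structure_on_ordinal_interval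
    (lam rho : Ordinal)
    (hlam_lim : Order.IsSuccLimit lam) (hlam_ctble : lam < (Cardinal.aleph 1).ord)
    (hrho_lt : rho < lam) (hrho_isol : rho = 0 ∨ ∃ γ : Ordinal, rho = γ + 1) :
    ∃ (d : Ordinal → Ordinal) (l : Ordinal → ℕ) (a : Ordinal → ℕ → Ordinal),
      -- d maps [ρ,λ) into LIM((ρ,λ])
      (∀ β : Ordinal, rho ≤ β → β < lam → (Order.IsSuccLimit (d β) ∧ rho < d β ∧ d β ≤ lam)) ∧
      -- d is a surjection onto LIM((ρ,λ])
      (∀ μ : Ordinal, Order.IsSuccLimit μ → rho < μ → μ ≤ lam →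
        ∃ β : Ordinal, rho ≤ β ∧ β < lam ∧ d β = μ) ∧
      -- l maps [ρ,λ] into ℕ ∖ {0}
      (∀ β : Ordinal, rho ≤ β → β ≤ lam → 1 ≤ l β) ∧
      -- a maps LIM((ρ,λ]) × ℕ into [ρ,λ)
      (∀ μ : Ordinal, Order.IsSuccLimit μ → rho < μ → μ ≤ lam →
        ∀ k : ℕ, rho ≤ a μ k ∧ a μ k < lam) ∧
      -- (a): iterating d from any β ∈ [ρ,λ) strictly increases and reaches λ
      (∀ β : Ordinal, rho ≤ β → β < lam →
        ∃ s : ℕ, 1 ≤ s ∧ (∀ i : ℕ, i < s → d^[i] β < d^[i + 1] β) ∧ d^[s] β = lam) ∧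
      -- (b)
      (∀ μ : Ordinal, Order.IsSuccLimit μ → rho < μ → μ ≤ lam →
        StrictMono (a μ) ∧ (∀ k : ℕ, a μ k < μ) ∧ (∀ γ : Ordinal, γ < μ → ∃ k : ℕ, γ < a μ k) ∧
        (∀ β : Ordinal, rho ≤ β → β < lam → (d β = μ ↔ ∃ k : ℕ, β = a μ k)) ∧
        (∀ k : ℕ, l (a μ k) = l μ + k)) ∧
      l lam = 1 ∧ l rho = 1 ∧
      -- (c)
      (∀ β γ : Ordinal, rho ≤ β → β < lam → β < γ → γ < d β → l β < l γ ∧ d γ ≤ d β) ∧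
      -- (d)
      (∀ β : Ordinal, rho ≤ β → β < lam → l (β + 1) = l β + 1) := by
  obtain ⟨d, l, a, h⟩ := DiamondAux.main lam hlam_lim hlam_ctble rho hrho_lt 1
  refine ⟨d, l, a, ?_, h.a2, h.a3, ?_, h.a6, h.a7, h.a4, ?_, h.a8, h.a9⟩
  · intro β h1 h2
    obtain ⟨x1, x2, x3⟩ := h.a1 β h1 h2
    exact ⟨x1, lt_of_le_of_lt h1 x2, x3⟩
  · intro μ hμ h1 h2 k
    obtain ⟨y1, y2⟩ := h.a5 μ hμ h1 h2 k
    exact ⟨y1, lt_of_lt_of_le y2 h2⟩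
  · have hlvl := (h.a7 lam hlam_lim hrho_lt le_rfl).2.2.2.2 0
    rw [h.a10, h.a4] at hlvl
    omega
end

section
/- Fix a countable limit ordinal α and functions ⋄ : [0,α) → LIM((0,α]), ℓ : [0,α] → ℕ∖{0}, a : LIM((0,α]) × ℕ → [0,α) satisfying: (a) for every β ∈ [0,α) there is s ≥ 1 with β < ⋄(β) < ⋄²(β) < … < ⋄^s(β) = α; (b) for every limit μ ∈ (0,α] the sequence k ↦ a(μ,k) is strictly increasing with supremum μ, ⋄⁻¹({μ}) = {a(μ,k) : k ∈ ℕ}, ℓ(a(μ,k)) = ℓ(μ)+k, and ℓ(α) = ℓ(0) = 1; (c) for β ∈ [0,α) and β < γ < ⋄(β) one has ℓ(γ) > ℓ(β) and ⋄(γ) ≤ ⋄(β); (d) ℓ(β+1) = ℓ(β)+1 for β ∈ [0,α). Then for every natural number L ≥ 1 there exist a unique n(L) ∈ ℕ and a unique finite sequence of ordinals β_L^0, β_L^1, …, β_L^{n(L)} such that: (i) 0 = β_L^{n(L)} < β_L^{n(L)-1} < … < β_L^0 = α; (ii) if i < n(L) and β_L^i is isolated, then ℓ(β_L^i) ≤ L,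 β_L^i = β_L^{i+1} + 1, and ℓ(β_L^{i+1}) < L; (iii) if i < n(L) and β_L^i is a limit ordinal, then ℓ(β_L^i) ≤ L and β_L^{i+1} is the unique ordinal satisfying ⋄(β_L^{i+1}) = β_L^i and ℓ(β_L^{i+1}) = L. -/
/-- The auxiliary ordinal structure `(⋄, ℓ, a)` on `[0, α]` satisfying conditions (a)–(d). -/
def AuxStruct (α : Ordinal) (d : Ordinal → Ordinal) (l : Ordinal → ℕ)
    (a : Ordinal → ℕ → Ordinal) : Prop :=
  -- d maps [0,α) into LIM((0,α])
  (∀ β : Ordinal, β < α → (Order.IsSuccLimit (d β) ∧ 0 < d β ∧ d β ≤ α)) ∧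
  -- d is a surjection onto LIM((0,α])
  (∀ μ : Ordinal, Order.IsSuccLimit μ → μ ≤ α → ∃ β : Ordinal, β < α ∧ d β = μ) ∧
  -- l maps [0,α] into ℕ ∖ {0}
  (∀ β : Ordinal, β ≤ α → 1 ≤ l β) ∧
  -- a maps LIM((0,α]) × ℕ into [0,α)
  (∀ μ : Ordinal, Order.IsSuccLimit μ → μ ≤ α → ∀ k : ℕ, a μ k < α) ∧
  -- (a)
  (∀ β : Ordinal, β < α →
    ∃ s : ℕ, 1 ≤ s ∧ (∀ i : ℕ, i < s → d^[i] β < d^[i + 1] β) ∧ d^[s] β = α) ∧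
  -- (b)
  (∀ μ : Ordinal, Order.IsSuccLimit μ → μ ≤ α →
    StrictMono (a μ) ∧ (∀ k : ℕ, a μ k < μ) ∧ (∀ γ : Ordinal, γ < μ → ∃ k : ℕ, γ < a μ k) ∧
    (∀ β : Ordinal, β < α → (d β = μ ↔ ∃ k : ℕ, β = a μ k)) ∧
    (∀ k : ℕ, l (a μ k) = l μ + k)) ∧
  l α = 1 ∧ l 0 = 1 ∧
  -- (c)
  (∀ β γ : Ordinal, β < α → β < γ → γ < d β → l β < l γ ∧ d γ ≤ d β) ∧
  -- (d)
  (∀ β : Ordinal, β < α → l (β + 1) = l β + 1)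

/-- The `⋄`-path associated to the level `L`: a finite strictly decreasing sequence
`b 0 = α > b 1 > ⋯ > b n = 0` such that each step is as prescribed by the mappings `⋄`
and `ℓ` at level `L`. -/
def IsDiamondPath (α : Ordinal) (d : Ordinal → Ordinal) (l : Ordinal → ℕ)
    (L : ℕ) (n : ℕ) (b : ℕ → Ordinal) : Prop :=
  b 0 = α ∧ b n = 0 ∧ (∀ i : ℕ, i < n → b (i + 1) < b i) ∧
  (∀ i : ℕ, i < n →
    (¬ Order.IsSuccLimit (b i) → l (b i) ≤ L ∧ b i = b (i + 1) + 1 ∧ l (b (i + 1)) < L) ∧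
    (Order.IsSuccLimit (b i) → l (b i) ≤ L ∧ d (b (i + 1)) = b i ∧ l (b (i + 1)) = L ∧
      ∀ γ : Ordinal, γ < α → d γ = b i → l γ = L → γ = b (i + 1)))

/-- For every `L ≥ 1` there exist a unique `n(L)` and a unique finite sequence
`β_L^0 = α > β_L^1 > ⋯ > β_L^{n(L)} = 0` forming the `⋄`-path at level `L`. -/
theorem diamond_path_exists_unique
    (α : Ordinal) (hαlim : Order.IsSuccLimit α) (hαctble : α < (Cardinal.aleph 1).ord)
    (d : Ordinal → Ordinal) (l : Ordinal → ℕ) (a : Ordinal → ℕ → Ordinal)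
    (hstr : AuxStruct α d l a) :
    ∀ L : ℕ, 1 ≤ L →
      ∃ (n : ℕ) (b : ℕ → Ordinal), IsDiamondPath α d l L n b ∧
        ∀ (n' : ℕ) (b' : ℕ → Ordinal), IsDiamondPath α d l L n' b' →
          n' = n ∧ ∀ i : ℕ, i ≤ n → b' i = b i := by
  classical
  obtain ⟨hd, hdsurj, hl1, haα, -, hb, hlα, hl0, -, hld⟩ := hstr
  intro L hL
  have key : ∀ β : Ordinal, β ≤ α → l β ≤ L →
      ∃ n : ℕ, ∃ b : ℕ → Ordinal, b 0 = β ∧ b n = 0 ∧ (∀ i, i < n → b (i+1) < b i) ∧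
      ∀ i, i < n →
        (¬ Order.IsSuccLimit (b i) → l (b i) ≤ L ∧ b i = b (i + 1) + 1 ∧ l (b (i + 1)) < L) ∧
        (Order.IsSuccLimit (b i) → l (b i) ≤ L ∧ d (b (i + 1)) = b i ∧ l (b (i + 1)) = L ∧
          ∀ γ : Ordinal, γ < α → d γ = b i → l γ = L → γ = b (i + 1)) := by
    intro β
    induction β using Ordinal.induction with
    | h β IH =>
      intro hβα hlβ
      rcases Ordinal.zero_or_succ_or_isSuccLimit β with h0 | ⟨γ, rfl⟩ | hlim
      · exact ⟨0, fun _ => 0, by simp [h0], rfl, by simp, by simp⟩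
      · have hγβ : γ < Order.succ γ := Order.lt_succ γ
        have hγα : γ < α := lt_of_lt_of_le hγβ hβα
        have hsucc : Order.succ γ = γ + 1 := (Ordinal.add_one_eq_succ γ).symm
        have hls : l (Order.succ γ) = l γ + 1 := by rw [hsucc]; exact hld γ hγα
        have hlγ : l γ < L := by omega
        obtain ⟨n, b, hb0, hbn, hdec, hcond⟩ := IH γ hγβ hγα.le hlγ.le
        refine ⟨n + 1, fun i => Nat.casesOn i (Order.succ γ) b, rfl, hbn, ?_, ?_⟩
        · intro i hi
          cases i with
          | zero => exact lt_of_le_of_lt (le_of_eq hb0) hγβ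
          | succ j => exact hdec j (by omega)
        · intro i hi
          cases i with
          | zero =>
            constructor
            · intro _
              exact ⟨hlβ, by show Order.succ γ = b 0 + 1; rw [hb0, hsucc],
                by show l (b 0) < L; rw [hb0]; exact hlγ⟩
            · intro hl
              exact absurd hl (Order.not_isSuccLimit_succ γ)
          | succ j => exact hcond j (by omega)
      · set k := L - l β with hk
        have hlk : l β + k = L := by omega
        obtain ⟨hmono, hltμ, hsupμ, hiff, hlev⟩ := hb β hlim hβα
        have hγα : a β k < α := haα β hlim hβα k
        have hlγ : l (a β k) = L := by rw [hlev k, hlk]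
        have hγβ : a β k < β := hltμ k
        obtain ⟨n, b, hb0, hbn, hdec, hcond⟩ := IH (a β k) hγβ hγα.le (le_of_eq hlγ)
        refine ⟨n + 1, fun i => Nat.casesOn i β b, rfl, hbn, ?_, ?_⟩
        · intro i hi
          cases i with
          | zero => exact lt_of_le_of_lt (le_of_eq hb0) hγβ
          | succ j => exact hdec j (by omega)
        · intro i hi
          cases i with
          | zero =>
            constructor
            · intro hnl; exact absurd hlim hnl
            · intro _
              refine ⟨hlβ, ?_, by show l (b 0) = L; rw [hb0]; exact hlγ, ?_⟩
              · show d (b 0) = β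
                rw [hb0]
                exact (hiff (a β k) hγα).mpr ⟨k, rfl⟩
              · intro γ' hγ' hdγ' hlγ'
                obtain ⟨k', hk'⟩ := (hiff γ' hγ').mp hdγ'
                have h1 : l β + k' = L := by rw [← hlev k', ← hk', hlγ']
                have h2 : k' = k := by omega
                show γ' = b 0
                rw [hb0, hk', h2]
          | succ j => exact hcond j (by omega)
  have hlαL : l α ≤ L := by rw [hlα]; exact hL
  obtain ⟨n, b, hb0, hbn, hdec, hcond⟩ := key α le_rfl hlαL
  refine ⟨n, b, ⟨hb0, hbn, hdec, hcond⟩, ?_⟩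
  intro n' b' hpath'
  obtain ⟨hb0', hbn', hdec', hcond'⟩ := hpath'
  have hle : ∀ (m : ℕ) (c : ℕ → Ordinal), c 0 = α → (∀ i, i < m → c (i+1) < c i) →
      ∀ i, i ≤ m → c i ≤ α := by
    intro m c hc0 hcd i
    induction i with
    | zero => intro _; exact le_of_eq hc0
    | succ j IHj =>
      intro hj
      exact le_trans (le_of_lt (hcd j (by omega))) (IHj (by omega))
  have hstrict : ∀ (m : ℕ) (c : ℕ → Ordinal), (∀ i, i < m → c (i+1) < c i) →
      ∀ i j, i < j → j ≤ m → c j < c i := by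
    intro m c hcd i j hij hjm
    induction j with
    | zero => omega
    | succ j IHj =>
      rcases Nat.lt_or_ge i j with h | h
      · exact lt_trans (hcd j (by omega)) (IHj h (by omega))
      · have hij' : i = j := by omega
        subst hij'
        exact hcd i (by omega)
  have hagree : ∀ i, i ≤ n → i ≤ n' → b' i = b i := by
    intro i
    induction i with
    | zero => intro _ _; rw [hb0, hb0']
    | succ j IHj =>
      intro hj hj'
      have heq : b' j = b j := IHj (by omega) (by omega)
      have hjn : j < n := by omega
      have hjn' : j < n' := by omega
      by_cases hlim : Order.IsSuccLimit (b j)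
      · have h1 := (hcond j hjn).2 hlim
        have h2 := (hcond' j hjn').2 (heq ▸ hlim)
        have hb'α : b' (j+1) < α := lt_of_lt_of_le (hdec' j hjn')
          (hle n' b' hb0' hdec' j (by omega))
        exact h1.2.2.2 (b' (j+1)) hb'α (by rw [h2.2.1, heq]) h2.2.2.1
      · have h1 := ((hcond j hjn).1 hlim).2.1
        have h2 := ((hcond' j hjn').1 (heq ▸ hlim)).2.1
        have h3 : b' (j+1) + 1 = b (j+1) + 1 := by rw [← h1, ← h2, heq]
        have h4 : Order.succ (b' (j+1)) = Order.succ (b (j+1)) := by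
          rw [← Ordinal.add_one_eq_succ, ← Ordinal.add_one_eq_succ, h3]
        exact Order.succ_injective h4
  have hnn : n' = n := by
    by_contra hne
    rcases Nat.lt_or_ge n' n with h | h
    · have h0 : b n' = b' n' := (hagree n' (by omega) le_rfl).symm
      have h1 : b n < b n' := hstrict n b hdec n' n h le_rfl
      rw [hbn, h0, hbn'] at h1
      exact absurd h1 (lt_irrefl 0)
    · have h' : n < n' := by omega
      have h0 : b' n = b n := hagree n le_rfl (by omega)
      have h1 : b' n' < b' n := hstrict n' b' hdec' n n' h' le_rfl
      rw [hbn', h0, hbn] at h1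
      exact absurd h1 (lt_irrefl 0)
  exact ⟨hnn, fun i hi => hagree i hi (by omega)⟩
end

section
/- Fix a countable limit ordinal α and functions ⋄, ℓ, a satisfying conditions (a)–(d) of the auxiliary ordinal structure on [0,α], and for each L ≥ 1 let (β_L^i)_{i=0}^{n(L)} be the unique strictly decreasing sequence from α to 0 associated to L (so that for i < n(L): if β_L^i is isolated then ℓ(β_L^i) ≤ L, β_L^i = β_L^{i+1}+1 and ℓ(β_L^{i+1}) < L; if β_L^i is limit then ℓ(β_L^i) ≤ L, ⋄(β_L^{i+1}) = β_L^i and ℓ(β_L^{i+1}) = L). Then for every L ≥ 1 the sequence (β_L^i)_{i=0}^{n(L)} is a subsequence of (β_{L+1}^j)_{j=0}^{n(L+1)}; equivalently, since both sequences are strictly decreasing, {β_L^i : 0 ≤ i ≤ n(L)} ⊆ {β_{L+1}^j : 0 ≤ j ≤ n(L+1)}. -/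
/-- The `⋄`-path at level `L` is a subsequence of the `⋄`-path at level `L+1`:
every member of the former occurs among the members of the latter. -/
theorem diamond_path_subsequence
    (α : Ordinal) (hαlim : Order.IsSuccLimit α) (hαctble : α < (Cardinal.aleph 1).ord)
    (d : Ordinal → Ordinal) (l : Ordinal → ℕ) (a : Ordinal → ℕ → Ordinal)
    (hstr : AuxStruct α d l a) :
    ∀ L : ℕ, 1 ≤ L →
      ∀ (n : ℕ) (b : ℕ → Ordinal) (n' : ℕ) (b' : ℕ → Ordinal),
        IsDiamondPath α d l L n b → IsDiamondPath α d l (L + 1) n' b' →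
        ∀ i : ℕ, i ≤ n → ∃ j : ℕ, j ≤ n' ∧ b' j = b i := by
  obtain ⟨hd, hdsurj, hl1, ha, hA, hB, hlα, hl0, hC, hD⟩ := hstr
  intro L hL n b n' b' hb hb'
  obtain ⟨hb0, hbn, hbdec, hbstep⟩ := hb
  obtain ⟨hb0', hbn', hbdec', hbstep'⟩ := hb'
  have mono' : ∀ j₁ j₂ : ℕ, j₁ ≤ j₂ → j₂ ≤ n' → b' j₂ ≤ b' j₁ := by
    intro j₁ j₂ h h2
    induction j₂ with
    | zero => have : j₁ = 0 := by omega
              subst this; exact le_rfl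
    | succ k ih =>
      rcases Nat.lt_or_ge j₁ (k + 1) with hh | hh
      · exact le_trans (le_of_lt (hbdec' k (by omega))) (ih (by omega) (by omega))
      · have : j₁ = k + 1 := by omega
        subst this; exact le_rfl
  intro i
  induction i with
  | zero =>
    intro _
    exact ⟨0, Nat.zero_le _, by rw [hb0', hb0]⟩
  | succ i ih =>
    intro hi
    obtain ⟨j, hj, hbj⟩ := ih (by omega)
    have hin : i < n := by omega
    have hbi_pos : 0 < b i :=
      lt_of_le_of_lt zero_le (hbdec i hin)
    have hjlt : j < n' := by
      rcases lt_or_eq_of_le hj with h | h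
      · exact h
      · exfalso
        rw [h, hbn'] at hbj
        exact absurd hbi_pos (by rw [← hbj]; exact lt_irrefl 0)
    by_cases hlim : Order.IsSuccLimit (b i)
    · -- limit case
      obtain ⟨_, hdβ, hlβ, _⟩ := (hbstep i hin).2 hlim
      obtain ⟨_, hdβ', hlβ', _⟩ := (hbstep' j hjlt).2 (by rw [hbj]; exact hlim)
      -- b (i+1) < b' (j+1)
      have hα1 : b' (j + 1) < α := by
        calc b' (j + 1) < b' j := hbdec' j hjlt
        _ ≤ b' 0 := mono' 0 j (Nat.zero_le _) hj
        _ = α := hb0'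
      rw [hbj] at hdβ'
      have hstart : b (i + 1) < b' (j + 1) := by
        rcases lt_trichotomy (b (i + 1)) (b' (j + 1)) with h | h | h
        · exact h
        · exfalso; rw [h, hlβ'] at hlβ; omega
        · exfalso
          have := (hC (b' (j + 1)) (b (i + 1)) hα1 h
            (by rw [hdβ']; exact hbdec i hin)).1
          rw [hlβ, hlβ'] at this; omega
      have key : ∀ t : ℕ, ∀ j'' : ℕ, j'' ≤ n' → n' - j'' ≤ t →
          b (i + 1) < b' j'' → ∃ j₂ : ℕ, j₂ ≤ n' ∧ b' j₂ = b (i + 1) := by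
        intro t
        induction t with
        | zero =>
          intro j'' h1 h2 h3
          have : j'' = n' := by omega
          rw [this, hbn'] at h3
          exact absurd h3 (not_lt_of_ge zero_le)
        | succ t iht =>
          intro j'' h1 h2 h3
          have hj''n : j'' < n' := by
            rcases lt_or_eq_of_le h1 with h | h
            · exact h
            · exfalso; rw [h, hbn'] at h3; exact not_lt_of_ge zero_le h3
          have hα2 : b' (j'' + 1) < α := by
            calc b' (j'' + 1) < b' j'' := hbdec' j'' hj''n
            _ ≤ b' 0 := mono' 0 j'' (Nat.zero_le _) h1
            _ = α := hb0'
          by_cases hlim'' : Order.IsSuccLimit (b' j'')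
          · obtain ⟨_, hd2, hl2, _⟩ := (hbstep' j'' hj''n).2 hlim''
            have hlt : b (i + 1) < b' (j'' + 1) := by
              rcases lt_trichotomy (b (i + 1)) (b' (j'' + 1)) with h | h | h
              · exact h
              · exfalso; rw [← h] at hl2; rw [hl2] at hlβ; omega
              · exfalso
                have := (hC (b' (j'' + 1)) (b (i + 1)) hα2 h
                  (by rw [hd2]; exact h3)).1
                rw [hlβ, hl2] at this; omega
            exact iht (j'' + 1) hj''n (by omega) hlt
          · obtain ⟨_, heq2, _⟩ := (hbstep' j'' hj''n).1 hlim''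
            have hle : b (i + 1) ≤ b' (j'' + 1) := by
              rw [heq2, Ordinal.add_one_eq_succ, Order.lt_succ_iff] at h3
              exact h3
            rcases lt_or_eq_of_le hle with h | h
            · exact iht (j'' + 1) hj''n (by omega) h
            · exact ⟨j'' + 1, hj''n, h.symm⟩
      exact key (n' - (j + 1)) (j + 1) hjlt le_rfl hstart
    · -- isolated case
      obtain ⟨_, heq, _⟩ := (hbstep i hin).1 hlim
      obtain ⟨_, heq', _⟩ := (hbstep' j hjlt).1 (by rw [hbj]; exact hlim)
      refine ⟨j + 1, hjlt, ?_⟩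
      have : b' (j + 1) + 1 = b (i + 1) + 1 := by rw [← heq', hbj, heq]
      rw [Ordinal.add_one_eq_succ, Ordinal.add_one_eq_succ] at this
      exact Order.succ_injective this
end

section
/- Fix a countable limit ordinal α and functions ⋄, ℓ, a satisfying conditions (a)–(d) of the auxiliary ordinal structure on [0,α], and for each L ≥ 1 let (β_L^i)_{i=0}^{n(L)} be the unique strictly decreasing sequence from α to 0 associated to L (so that for i < n(L): if β_L^i is isolated then ℓ(β_L^i) ≤ L, β_L^i = β_L^{i+1}+1 and ℓ(β_L^{i+1}) < L; if β_L^i is limit then ℓ(β_L^i) ≤ L, ⋄(β_L^{i+1}) = β_L^i and ℓ(β_L^{i+1}) = L). Then ⋃_{L ≥ 1} {β_L^j : 0 ≤ j ≤ n(L)} = [0,α], i.e., every ordinal γ ≤ α occurs as some β_L^j. -/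
open Classical in
noncomputable def auxNext (l : Ordinal → ℕ) (a : Ordinal → ℕ → Ordinal) (L : ℕ)
    (β : Ordinal) : Ordinal :=
  if Order.IsSuccLimit β then a β (L - l β) else Ordinal.pred β

theorem auxNext_limit {l a L β} (h : Order.IsSuccLimit β) :
    auxNext l a L β = a β (L - l β) := by rw [auxNext, if_pos h]

theorem auxNext_not_limit {l a L β} (h : ¬ Order.IsSuccLimit β) :
    auxNext l a L β = Ordinal.pred β := by rw [auxNext, if_neg h]

theorem auxNext_zero {l a L} : auxNext l a L 0 = 0 := by
  rw [auxNext_not_limit Ordinal.not_isSuccLimit_zero, Ordinal.pred_zero]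

theorem aux_step {α d l a} (hstr : AuxStruct α d l a) (L : ℕ)
    {β : Ordinal} (hβ0 : 0 < β) (hβα : β ≤ α) (hlβ : l β ≤ L) :
    auxNext l a L β < β ∧ l (auxNext l a L β) ≤ L ∧
    (¬ Order.IsSuccLimit β → β = auxNext l a L β + 1 ∧ l (auxNext l a L β) < L) ∧
    (Order.IsSuccLimit β → d (auxNext l a L β) = β ∧ l (auxNext l a L β) = L ∧
      ∀ γ : Ordinal, γ < α → d γ = β → l γ = L → γ = auxNext l a L β) := by
  obtain ⟨hd, hsurj, hl1, haα, hch, hb, hlα, hl0, hc, hsd⟩ := hstr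
  by_cases hlim : Order.IsSuccLimit β
  · obtain ⟨hmono, hltμ, hcof, hiff, hlev⟩ := hb β hlim hβα
    have hne : auxNext l a L β = a β (L - l β) := auxNext_limit hlim
    have hlv : l (auxNext l a L β) = L := by rw [hne, hlev]; omega
    refine ⟨?_, le_of_eq hlv, fun h => absurd hlim h, fun _ => ⟨?_, hlv, ?_⟩⟩
    · rw [hne]; exact hltμ _
    · rw [hne]; exact (hiff _ (haα β hlim hβα _)).mpr ⟨_, rfl⟩
    · intro γ hγα hdγ hlγ
      obtain ⟨k, rfl⟩ := (hiff γ hγα).mp hdγ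
      rw [hlev] at hlγ
      rw [hne]
      congr 1
      omega
  · rcases Ordinal.zero_or_succ_or_isSuccLimit β with h0 | ⟨x, rfl⟩ | h
    · exact absurd h0 hβ0.ne'
    · have hne : auxNext l a L (Order.succ x) = x := by
        rw [auxNext_not_limit hlim, Ordinal.pred_succ]
      have hxα : x < α := lt_of_lt_of_le (Order.lt_succ x) hβα
      have hls : l (Order.succ x) = l x + 1 := by
        rw [← Ordinal.add_one_eq_succ]; exact hsd x hxα
      refine ⟨?_, ?_, fun _ => ⟨?_, ?_⟩, fun h => absurd h hlim⟩
      · rw [hne]; exact Order.lt_succ x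
      · rw [hne]; omega
      · rw [hne, Ordinal.add_one_eq_succ]
      · rw [hne]; omega
    · exact absurd h hlim

theorem aux_reach_zero {α d l a} (hstr : AuxStruct α d l a) (L : ℕ) :
    ∀ β : Ordinal, β ≤ α → l β ≤ L → ∃ n : ℕ, (auxNext l a L)^[n] β = 0 := by
  intro β
  induction β using Ordinal.induction with
  | h β IH =>
    intro hβα hlβ
    rcases eq_or_lt_of_le ((zero_le : (0 : Ordinal) ≤ β)) with h0 | hβ0
    · exact ⟨0, h0.symm⟩
    · obtain ⟨hdec, hln, -, -⟩ := aux_step hstr L hβ0 hβα hlβ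
      obtain ⟨n, hn⟩ := IH _ hdec (le_of_lt (lt_of_lt_of_le hdec hβα)) hln
      exact ⟨n + 1, by rw [Function.iterate_succ_apply]; exact hn⟩

theorem aux_invariant {α d l a} (hstr : AuxStruct α d l a) (L : ℕ) (hL : 1 ≤ L) :
    ∀ i : ℕ, (auxNext l a L)^[i] α ≤ α ∧ l ((auxNext l a L)^[i] α) ≤ L := by
  intro i
  induction i with
  | zero => exact ⟨le_rfl, by rw [Function.iterate_zero_apply, hstr.2.2.2.2.2.2.1]; exact hL⟩
  | succ i IH =>
    rw [Function.iterate_succ_apply']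
    rcases eq_or_lt_of_le ((zero_le : (0 : Ordinal) ≤ ((auxNext l a L)^[i] α))) with h0 | hpos
    · rw [← h0, auxNext_zero]
      exact ⟨(zero_le : (0 : Ordinal) ≤ α), by rw [hstr.2.2.2.2.2.2.2.1]; exact hL⟩
    · obtain ⟨hdec, hln, -, -⟩ := aux_step hstr L hpos IH.1 IH.2
      exact ⟨le_of_lt (lt_of_lt_of_le hdec IH.1), hln⟩

theorem aux_descend {α d l a} (hstr : AuxStruct α d l a) (L : ℕ)
    {γ : Ordinal} (hγα : γ < α) (hlγ : l γ ≤ L) :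
    ∀ δ : Ordinal, γ ≤ δ → δ < d γ → δ ≤ α → l δ ≤ L →
      ∃ i : ℕ, (auxNext l a L)^[i] δ = γ := by
  intro δ
  induction δ using Ordinal.induction with
  | h δ IH =>
    intro hγδ hδdγ hδα hlδ
    rcases eq_or_lt_of_le hγδ with rfl | hlt
    · exact ⟨0, rfl⟩
    have hδ0 : 0 < δ := lt_of_le_of_lt ((zero_le : (0 : Ordinal) ≤ γ)) hlt
    obtain ⟨hdec, hlnext, hiso, hlimc⟩ := aux_step hstr L hδ0 hδα hlδ
    have hnextγ : γ ≤ auxNext l a L δ := by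
      by_cases hlim : Order.IsSuccLimit δ
      · obtain ⟨hdn, hln, -⟩ := hlimc hlim
        by_contra hcon
        push_neg at hcon
        have hnα : auxNext l a L δ < α := lt_of_lt_of_le hdec hδα
        have := (hstr.2.2.2.2.2.2.2.2.1 (auxNext l a L δ) γ hnα hcon (by rw [hdn]; exact hlt)).1
        omega
      · obtain ⟨hδeq, -⟩ := hiso hlim
        have h2 := hlt
        rw [hδeq, Ordinal.add_one_eq_succ] at h2
        exact Order.lt_succ_iff.mp h2
    obtain ⟨i, hi⟩ := IH _ hdec hnextγ (lt_trans hdec hδdγ)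
      (le_of_lt (lt_of_lt_of_le hdec hδα)) hlnext
    exact ⟨i + 1, by rw [Function.iterate_succ_apply]; exact hi⟩

theorem aux_cover {α d l a} (hstr : AuxStruct α d l a) (L : ℕ)
    {γ : Ordinal} (hγα : γ < α) (hlγ : l γ ≤ L)
    (hj : ∃ j : ℕ, (auxNext l a L)^[j] α = d γ) :
    ∃ j : ℕ, (auxNext l a L)^[j] α = γ := by
  obtain ⟨hμlim, hμ0, hμα⟩ := hstr.1 γ hγα
  obtain ⟨hmono, hltμ, hcof, hiff, hlev⟩ := hstr.2.2.2.2.2.1 (d γ) hμlim hμα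
  obtain ⟨k, hγeq⟩ := (hiff γ hγα).mp rfl
  have hlγk : l γ = l (d γ) + k := by nth_rewrite 1 [hγeq]; exact hlev k
  have hnext : auxNext l a L (d γ) = a (d γ) (L - l (d γ)) := auxNext_limit hμlim
  have hγle : γ ≤ auxNext l a L (d γ) := by
    rw [hnext]; nth_rewrite 1 [hγeq]; exact hmono.monotone (by omega)
  have h1 : auxNext l a L (d γ) < d γ := by rw [hnext]; exact hltμ _
  have h2 : auxNext l a L (d γ) ≤ α :=
    le_of_lt (by rw [hnext]; exact hstr.2.2.2.1 (d γ) hμlim hμα _)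
  have h3 : l (auxNext l a L (d γ)) ≤ L := by rw [hnext, hlev]; omega
  obtain ⟨i, hi⟩ := aux_descend hstr L hγα hlγ _ hγle h1 h2 h3
  obtain ⟨j, hjeq⟩ := hj
  refine ⟨i + (1 + j), ?_⟩
  rw [Function.iterate_add_apply, Function.iterate_add_apply, hjeq, Function.iterate_one]
  exact hi

theorem aux_path {α d l a} (hstr : AuxStruct α d l a) (L : ℕ) (hL : 1 ≤ L)
    {γ : Ordinal} (hmem : ∃ j : ℕ, (auxNext l a L)^[j] α = γ) :
    ∃ (n : ℕ) (b : ℕ → Ordinal),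
      (b 0 = α ∧ b n = 0 ∧ (∀ i : ℕ, i < n → b (i + 1) < b i) ∧
      (∀ i : ℕ, i < n →
        (¬ Order.IsSuccLimit (b i) → l (b i) ≤ L ∧ b i = b (i + 1) + 1 ∧ l (b (i + 1)) < L) ∧
        (Order.IsSuccLimit (b i) → l (b i) ≤ L ∧ d (b (i + 1)) = b i ∧ l (b (i + 1)) = L ∧
          ∀ γ' : Ordinal, γ' < α → d γ' = b i → l γ' = L → γ' = b (i + 1)))) ∧
      ∃ j : ℕ, j ≤ n ∧ b j = γ := by
  classical
  have hterm : ∃ n : ℕ, (auxNext l a L)^[n] α = 0 :=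
    aux_reach_zero hstr L α le_rfl (by rw [hstr.2.2.2.2.2.2.1]; exact hL)
  set b : ℕ → Ordinal := fun i => (auxNext l a L)^[i] α with hb
  refine ⟨Nat.find hterm, b, ⟨rfl, Nat.find_spec hterm, ?_, ?_⟩, ?_⟩
  · intro i hi
    have hpos : 0 < b i := by
      rcases eq_or_lt_of_le ((zero_le : (0 : Ordinal) ≤ (b i))) with h0 | h
      · exact absurd h0.symm (Nat.find_min hterm hi)
      · exact h
    have hinv := aux_invariant hstr L hL i
    have hbs : b (i + 1) = auxNext l a L (b i) := Function.iterate_succ_apply' _ _ _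
    rw [hbs]
    exact (aux_step hstr L hpos hinv.1 hinv.2).1
  · intro i hi
    have hpos : 0 < b i := by
      rcases eq_or_lt_of_le ((zero_le : (0 : Ordinal) ≤ (b i))) with h0 | h
      · exact absurd h0.symm (Nat.find_min hterm hi)
      · exact h
    have hinv := aux_invariant hstr L hL i
    obtain ⟨hdec, hln, hiso, hlimc⟩ := aux_step hstr L hpos hinv.1 hinv.2
    have hbs : b (i + 1) = auxNext l a L (b i) := Function.iterate_succ_apply' _ _ _
    constructor
    · intro h
      obtain ⟨h1, h2⟩ := hiso h
      exact ⟨hinv.2, by rw [hbs]; exact h1, by rw [hbs]; exact h2⟩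
    · intro h
      obtain ⟨h1, h2, h3⟩ := hlimc h
      exact ⟨hinv.2, by rw [hbs]; exact h1, by rw [hbs]; exact h2,
        fun γ' hγ' hd' hl' => by rw [hbs]; exact h3 γ' hγ' hd' hl'⟩
  · obtain ⟨j, hj⟩ := hmem
    by_cases hjn : j ≤ Nat.find hterm
    · exact ⟨j, hjn, hj⟩
    · push_neg at hjn
      refine ⟨Nat.find hterm, le_rfl, ?_⟩
      have h0 : b j = 0 := by
        have hsplit : j = (j - Nat.find hterm) + Nat.find hterm := by omega
        show (auxNext l a L)^[j] α = 0
        rw [hsplit, Function.iterate_add_apply, Nat.find_spec hterm,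
          Function.iterate_fixed auxNext_zero]
      show (auxNext l a L)^[Nat.find hterm] α = γ
      rw [Nat.find_spec hterm, ← hj]
      exact h0.symm

/-- The union over all levels `L ≥ 1` of the sets of members of the `⋄`-paths is the whole
interval `[0, α]`: every member of every path lies in `[0, α]`, and conversely every
ordinal `γ ≤ α` occurs as a member `β_L^j` of the path at some level `L ≥ 1`. -/
theorem diamond_paths_cover_interval
    (α : Ordinal) (hαlim : Order.IsSuccLimit α) (hαctble : α < (Cardinal.aleph 1).ord)
    (d : Ordinal → Ordinal) (l : Ordinal → ℕ) (a : Ordinal → ℕ → Ordinal)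
    (hstr : AuxStruct α d l a) :
    (∀ L : ℕ, 1 ≤ L → ∀ (n : ℕ) (b : ℕ → Ordinal), IsDiamondPath α d l L n b →
      ∀ j : ℕ, j ≤ n → b j ≤ α) ∧
    (∀ γ : Ordinal, γ ≤ α →
      ∃ (L : ℕ) (n : ℕ) (b : ℕ → Ordinal), 1 ≤ L ∧ IsDiamondPath α d l L n b ∧
        ∃ j : ℕ, j ≤ n ∧ b j = γ) := by
  classical
  constructor
  · rintro L hL n b ⟨hb0, hbn, hdec, hstep⟩ j hj
    clear hbn hstep
    induction j with
    | zero => exact le_of_eq hb0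
    | succ j IH =>
      exact le_of_lt (lt_of_lt_of_le (hdec j (by omega)) (IH (by omega)))
  · intro γ hγ
    rcases eq_or_lt_of_le hγ with rfl | hγα
    · obtain ⟨n, b, hpath, j, hjn, hbj⟩ := aux_path hstr 1 le_rfl ⟨0, rfl⟩
      exact ⟨1, n, b, le_rfl, hpath, j, hjn, hbj⟩
    · obtain ⟨s, hs1, hinc, htop⟩ := hstr.2.2.2.2.1 γ hγα
      set L := (Finset.range (s + 1)).sup (fun i => l (d^[i] γ)) with hLdef
      have hLi : ∀ i, i ≤ s → l (d^[i] γ) ≤ L := by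
        intro i hi
        have hmem : i ∈ Finset.range (s + 1) := Finset.mem_range.mpr (by omega)
        exact Finset.le_sup (f := fun i => l (d^[i] γ)) hmem
      have hL1 : 1 ≤ L := le_trans (hstr.2.2.1 γ hγ) (hLi 0 (by omega))
      have hmono : ∀ j, j ≤ s → ∀ i, i ≤ j → d^[i] γ ≤ d^[j] γ := by
        intro j
        induction j with
        | zero => intro _ i hi; rw [Nat.le_zero.mp hi]
        | succ j IH =>
          intro hjs i hi
          rcases Nat.lt_or_ge i (j + 1) with h | h
          · exact le_trans (IH (by omega) i (by omega)) (le_of_lt (hinc j (by omega)))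
          · have hieq : i = j + 1 := by omega
            rw [hieq]
      have hltα : ∀ i, i < s → d^[i] γ < α := by
        intro i hi
        calc d^[i] γ < d^[i + 1] γ := hinc i hi
        _ ≤ d^[s] γ := hmono s le_rfl (i + 1) (by omega)
        _ = α := htop
      have hmem : ∀ i, i ≤ s → ∃ j : ℕ, (auxNext l a L)^[j] α = d^[s - i] γ := by
        intro i
        induction i with
        | zero =>
          intro _
          exact ⟨0, by rw [Function.iterate_zero_apply, Nat.sub_zero, htop]⟩
        | succ i IH =>
          intro his
          obtain ⟨j, hj⟩ := IH (by omega)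
          have hm : s - i = (s - (i + 1)) + 1 := by omega
          have hdd : d^[s - i] γ = d (d^[s - (i + 1)] γ) := by
            rw [hm, Function.iterate_succ_apply']
          have h1 : s - (i + 1) < s := by omega
          have h2 : s - (i + 1) ≤ s := by omega
          exact aux_cover hstr L (hltα (s - (i + 1)) h1) (hLi (s - (i + 1)) h2)
            ⟨j, by rw [← hdd]; exact hj⟩
      have hmemγ : ∃ j : ℕ, (auxNext l a L)^[j] α = γ := by
        have h := hmem s le_rfl
        rwa [Nat.sub_self, Function.iterate_zero_apply] at h
      obtain ⟨n, b, hpath, j, hjn, hbj⟩ := aux_path hstr L hL1 hmemγ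
      exact ⟨L, n, b, hL1, hpath, j, hjn, hbj⟩
end

section
/- Fix a countable limit ordinal α and functions ⋄, ℓ, a satisfying conditions (a)–(d) of the auxiliary ordinal structure on [0,α]. Then for all ordinals γ, β with 0 ≤ γ ≤ β ≤ α there exists a finite strictly increasing sequence of ordinals δ_0, δ_1, …, δ_n such that δ_0 = γ, δ_n = β, and for every j < n: δ_{j+1} = ⋄(δ_j) if ⋄(δ_j) ≤ β, and δ_{j+1} = δ_j + 1 otherwise. -/
/-- Strict monotonicity along an initial segment of steps. -/
lemma seq_strict_lt {δ : ℕ → Ordinal} {n : ℕ} (h : ∀ j : ℕ, j < n → δ j < δ (j + 1)) :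
    ∀ i j : ℕ, i < j → j ≤ n → δ i < δ j := by
  intro i j hij hjn
  induction j with
  | zero => omega
  | succ j ih =>
    have hj : δ j < δ (j + 1) := h j (by omega)
    rcases Nat.lt_or_ge i j with h' | h'
    · exact (ih (by omega) (by omega)).trans hj
    · have : i = j := by omega
      subst this; exact hj

/-- Extend a step sequence with target `β'` to one with target `β`. -/
lemma extend_seq (d : Ordinal → Ordinal) (β' β γ : Ordinal) (n : ℕ) (δ : ℕ → Ordinal)
    (h0 : δ 0 = γ) (hn : δ n = β') (hinc : ∀ j : ℕ, j < n → δ j < δ (j + 1))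
    (hstep : ∀ j : ℕ, j < n →
      (d (δ j) ≤ β' → δ (j + 1) = d (δ j)) ∧ (¬ d (δ j) ≤ β' → δ (j + 1) = δ j + 1))
    (hcompat : ∀ j : ℕ, j < n → d (δ j) ≤ β → d (δ j) ≤ β')
    (hβ'β : β' < β)
    (hlast : (d β' ≤ β → β = d β') ∧ (¬ d β' ≤ β → β = β' + 1)) :
    ∃ (m : ℕ) (δ' : ℕ → Ordinal), δ' 0 = γ ∧ δ' m = β ∧
      (∀ j : ℕ, j < m → δ' j < δ' (j + 1)) ∧
      (∀ j : ℕ, j < m →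
        (d (δ' j) ≤ β → δ' (j + 1) = d (δ' j)) ∧ (¬ d (δ' j) ≤ β → δ' (j + 1) = δ' j + 1)) := by
  refine ⟨n + 1, Function.update δ (n + 1) β,
    (Function.update_of_ne (by omega) _ _).trans h0, Function.update_self _ _ _, ?_, ?_⟩
  · intro j hj
    rcases Nat.lt_or_ge j n with h' | h'
    · rw [Function.update_of_ne (by omega), Function.update_of_ne (by omega)]
      exact hinc j h'
    · have : j = n := by omega
      subst this
      rw [Function.update_of_ne (by omega), Function.update_self, hn]
      exact hβ'β
  · intro j hj
    rcases Nat.lt_or_ge j n with h' | h'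
    · rw [Function.update_of_ne (show j ≠ n + 1 by omega),
        Function.update_of_ne (show j + 1 ≠ n + 1 by omega)]
      constructor
      · intro hle
        exact (hstep j h').1 (hcompat j h' hle)
      · intro hnle
        exact (hstep j h').2 fun hle => hnle (hle.trans hβ'β.le)
    · have : j = n := by omega
      subst this
      rw [Function.update_of_ne (show j ≠ j + 1 by omega), Function.update_self, hn]
      exact ⟨fun h => hlast.1 h, fun h => hlast.2 h⟩

/-- For all `γ ≤ β ≤ α` there is a finite strictly increasing sequence from `γ` to `β`
whose steps are `δ_{j+1} = ⋄(δ_j)` whenever `⋄(δ_j) ≤ β` and `δ_{j+1} = δ_j + 1`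
otherwise. -/
theorem diamond_increasing_sequence
    (α : Ordinal) (hαlim : Order.IsSuccLimit α) (hαctble : α < (Cardinal.aleph 1).ord)
    (d : Ordinal → Ordinal) (l : Ordinal → ℕ) (a : Ordinal → ℕ → Ordinal)
    (hstr : AuxStruct α d l a) :
    ∀ γ β : Ordinal, γ ≤ β → β ≤ α →
      ∃ (n : ℕ) (δ : ℕ → Ordinal), δ 0 = γ ∧ δ n = β ∧
        (∀ j : ℕ, j < n → δ j < δ (j + 1)) ∧
        (∀ j : ℕ, j < n →
          (d (δ j) ≤ β → δ (j + 1) = d (δ j)) ∧ (¬ d (δ j) ≤ β → δ (j + 1) = δ j + 1)) := by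
  obtain ⟨hd_lim, hd_surj, hl_pos, ha_lt, hA, hB, hlα, hl0, hC, hD⟩ := hstr
  have hdgt : ∀ δ : Ordinal, δ < α → δ < d δ := by
    intro δ hδ
    obtain ⟨s, hs1, hsi, hsα⟩ := hA δ hδ
    simpa using hsi 0 hs1
  intro γ β
  induction β using Ordinal.induction generalizing γ with
  | h β IH =>
  intro hγβ hβα
  rcases eq_or_lt_of_le hγβ with rfl | hγβ
  · exact ⟨0, fun _ => γ, rfl, rfl, fun j hj => absurd hj (Nat.not_lt_zero j),
      fun j hj => absurd hj (Nat.not_lt_zero j)⟩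
  rcases Ordinal.zero_or_succ_or_isSuccLimit β with rfl | ⟨b, rfl⟩ | hβlim
  · exact absurd hγβ (not_lt.mpr (zero_le (a := γ)))
  · -- successor case: β = succ b = b + 1
    rw [← Ordinal.add_one_eq_succ] at *
    have hbβ : b < b + 1 := by
      rw [Ordinal.add_one_eq_succ]; exact Order.lt_succ b
    have hbα : b < α := lt_of_lt_of_le hbβ hβα
    have hγb : γ ≤ b := by
      rw [Ordinal.add_one_eq_succ] at hγβ; exact Order.lt_succ_iff.mp hγβ
    obtain ⟨n, δ, h0, hn, hinc, hstep⟩ := IH b hbβ γ hγb hbα.le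
    refine extend_seq d b (b + 1) γ n δ h0 hn hinc hstep ?_ hbβ ?_
    · intro j hj hle
      have hjb : δ j < b := hn ▸ seq_strict_lt hinc j n hj le_rfl
      have hjα : δ j < α := hjb.trans hbα
      by_contra hnle
      have hblt : b < d (δ j) := lt_of_not_ge hnle
      have : b + 1 < d (δ j) := (hd_lim (δ j) hjα).1.succ_lt hblt
      exact absurd hle (not_le_of_gt this)
    · have hbd : b < d b := hdgt b hbα
      have : b + 1 < d b := (hd_lim b hbα).1.succ_lt hbd
      exact ⟨fun h => absurd h (not_le_of_gt this), fun _ => rfl⟩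
  · -- limit case
    obtain ⟨hamono, haltμ, hacof, hpre, hla⟩ := hB β hβlim hβα
    obtain ⟨k0, hk0⟩ := hacof γ hγβ
    have hP : ∃ k : ℕ, γ ≤ a β k := ⟨k0, hk0.le⟩
    set k := Nat.find hP with hk_def
    have hk : γ ≤ a β k := Nat.find_spec hP
    have hkmin : ∀ j : ℕ, j < k → a β j < γ := by
      intro j hj
      exact lt_of_not_ge (Nat.find_min hP hj)
    set t := a β k with ht_def
    have htα : t < α := ha_lt β hβlim hβα k
    have htβ : t < β := haltμ k
    have hdt : d t = β := (hpre t htα).mpr ⟨k, rfl⟩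
    obtain ⟨n, δ, h0, hn, hinc, hstep⟩ := IH t htβ γ hk htα.le
    refine extend_seq d t β γ n δ h0 hn hinc hstep ?_ htβ ?_
    · intro j hj hle
      have hjt : δ j < t := hn ▸ seq_strict_lt hinc j n hj le_rfl
      have hjγ : γ ≤ δ j := by
        rcases Nat.eq_zero_or_pos j with rfl | hpos
        · exact h0.ge
        · exact h0 ▸ (seq_strict_lt hinc 0 j hpos (by omega)).le
      have hjα : δ j < α := hjt.trans htα
      by_contra hnle
      have htlt : t < d (δ j) := lt_of_not_ge hnle
      have hdd : d t ≤ d (δ j) := (hC (δ j) t hjα hjt htlt).2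
      have hdeq : d (δ j) = β := le_antisymm hle (hdt ▸ hdd)
      obtain ⟨k', hk'⟩ := (hpre (δ j) hjα).mp hdeq
      have hk'k : k' < k := by
        have : a β k' < a β k := hk' ▸ hjt
        exact hamono.lt_iff_lt.mp this
      exact absurd (hk' ▸ hjγ) (not_le_of_gt (hkmin k' hk'k))
    · rw [hdt]
      exact ⟨fun _ => rfl, fun h => absurd le_rfl h⟩
end

section
/- Let X be a metric space, β a countable ordinal, and B a subset of X belonging to the additive Borel class Σ⁰_{1+β}(X). Then there exist a nonempty well-founded tree T on ℕ with h^T_∅ ≤ β and a set Θ ⊆ X × T_max, all of whose sections Θ^t (t ∈ T_max) are open in X, such that B = B^{T,Θ}(∅). Moreover, T can be chosen so that for every non-terminal node t ∈ T and every l ∈ ℕ, the extension t⌢l belongs to T. -/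
private lemma subtype_iSup_congr {P Q : ℕ → Prop} (f : ℕ → Ordinal) (h : ∀ k, P k ↔ Q k) :
    ⨆ k : {k // P k}, f k.1 = ⨆ k : {k // Q k}, f k.1 := by
  obtain rfl : P = Q := funext fun k => propext (h k)
  rfl

/-- Every `Σ⁰_{1+β}` subset `B` of a metric space `X` is of the form `B^{T,Θ}(∅)` for a
nonempty well-founded tree `T` on `ℕ` (modelled as a set of lists closed under initial
segments and without infinite branches) with rank `h^T_∅ ≤ β` and a set `Θ ⊆ X × T_max`
with open sections; moreover `T` can be chosen so that every non-terminal node has all of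
its one-step extensions in `T`.  Here `h` is the rank function of `T` (characterized by
`h t = sup { h (t ++ [k]) + 1 : t ++ [k] ∈ T }`) and `BB` is the family `B^{T,Θ}`
(characterized by its defining recursion). -/
theorem Sigma0_eq_BTTheta
    {X : Type*} [MetricSpace X]
    (β : Ordinal) (hβ : β < (Cardinal.aleph 1).ord)
    (B : Set X) (hB : B ∈ Sigma0 X (1 + β)) :
    ∃ (T : Set (List ℕ)) (Θ : Set (X × List ℕ)) (h : List ℕ → Ordinal) (BB : List ℕ → Set X),
      T.Nonempty ∧
      (∀ s t : List ℕ, s <+: t → t ∈ T → s ∈ T) ∧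
      (¬ ∃ x : ℕ → ℕ, ∀ n : ℕ, List.ofFn (fun i : Fin n => x i) ∈ T) ∧
      (∀ t ∈ T, (∃ k : ℕ, t ++ [k] ∈ T) → ∀ m : ℕ, t ++ [m] ∈ T) ∧
      (∀ p ∈ Θ, p.2 ∈ T ∧ ∀ k : ℕ, p.2 ++ [k] ∉ T) ∧
      (∀ t : List ℕ, IsOpen {z : X | (z, t) ∈ Θ}) ∧
      (∀ t ∈ T, h t = ⨆ k : {k : ℕ // t ++ [k] ∈ T}, (h (t ++ [k.1]) + 1)) ∧
      (∀ t ∈ T, (∀ k : ℕ, t ++ [k] ∉ T) → BB t = {z : X | (z, t) ∈ Θ}) ∧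
      (∀ t ∈ T, (∃ k : ℕ, t ++ [k] ∈ T) →
        BB t = ⋃ k : ℕ, ⋃ (_ : t ++ [k] ∈ T), (BB (t ++ [k]))ᶜ) ∧
      h [] ≤ β ∧ BB [] = B := by
  clear hβ
  induction β using Ordinal.induction generalizing B with
  | h β IH =>
  rw [Sigma0] at hB
  rcases hB with ⟨-, hopen⟩ | ⟨-, A, γ, hA, rfl⟩
  · -- base case: B is open
    refine ⟨{[]}, {p | p.1 ∈ B ∧ p.2 = []}, fun _ => 0, fun _ => B,
      ⟨[], rfl⟩, ?_, ?_, ?_, ?_, ?_, ?_, ?_, ?_, ?_, ?_⟩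
    · intro s t hst ht
      simp only [Set.mem_singleton_iff] at ht ⊢
      subst ht
      exact List.prefix_nil.mp hst
    · rintro ⟨x, hx⟩
      have h1 := hx 1
      simp [List.ofFn_succ] at h1
    · rintro t ht ⟨k, hk⟩ m
      exfalso
      simp only [Set.mem_singleton_iff] at ht
      subst ht
      simp at hk
    · rintro ⟨x, t⟩ ⟨hxB, ht⟩
      subst ht
      exact ⟨rfl, fun k hk => by simp at hk⟩
    · intro t
      rcases t with _ | ⟨a, u⟩
      · have hs : {z : X | (z, ([] : List ℕ)) ∈ {p : X × List ℕ | p.1 ∈ B ∧ p.2 = []}} = B := by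
          ext z; simp
        rw [hs]; exact hopen
      · have hs : {z : X | (z, a :: u) ∈ {p : X × List ℕ | p.1 ∈ B ∧ p.2 = []}} = ∅ := by
          ext z; simp
        rw [hs]; exact isOpen_empty
    · intro t ht
      simp only [Set.mem_singleton_iff] at ht
      subst ht
      haveI : IsEmpty {k : ℕ // ([] : List ℕ) ++ [k] ∈ ({[]} : Set (List ℕ))} :=
        ⟨fun ⟨k, hk⟩ => by simp at hk⟩
      rw [ciSup_of_empty]
      rfl
    · intro t ht _
      simp only [Set.mem_singleton_iff] at ht
      subst ht
      ext z; simp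
    · rintro t ht ⟨k, hk⟩
      exfalso
      simp only [Set.mem_singleton_iff] at ht
      subst ht
      simp at hk
    · exact zero_le (a := β)
    · rfl
  · -- inductive case: B = ⋃ n, (A n)ᶜ
    choose h1 hlt hmem using hA
    have hγ1 : ∀ n, 1 + (γ n - 1) = γ n := fun n => Ordinal.add_sub_cancel_of_le (h1 n)
    have hδβ : ∀ n, γ n - 1 < β := fun n => (add_lt_add_iff_left 1).mp (by rw [hγ1 n]; exact hlt n)
    choose T Θ hf BBf Tne Tpre Twf Tspread TΘ TΘopen Trec Tterm Tnont Tle TBB using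
      fun n => IH (γ n - 1) (hδβ n) (A n) (by rw [hγ1 n]; exact hmem n)
    have hnilT : ∀ n, [] ∈ T n := fun n => Tpre n [] _ List.nil_prefix (Tne n).choose_spec
    set T' : Set (List ℕ) := {l | l = [] ∨ ∃ n t, t ∈ T n ∧ l = n :: t} with hT'
    have hmemT' : ∀ n t, n :: t ∈ T' ↔ t ∈ T n := by
      intro n t
      constructor
      · rintro (h | ⟨m, u, hu, heq⟩)
        · exact absurd h (List.cons_ne_nil n t)
        · injection heq with e1 e2
          subst e1; subst e2; exact hu
      · intro h; exact Or.inr ⟨n, t, h, rfl⟩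
    have hconsT' : ∀ n, [n] ∈ T' := fun n => (hmemT' n []).mpr (hnilT n)
    set Θ' : Set (X × List ℕ) := {p | ∃ n t, (p.1, t) ∈ Θ n ∧ p.2 = n :: t} with hΘ'
    refine ⟨T', Θ',
      fun l => match l with
        | [] => ⨆ k : {k : ℕ // [k] ∈ T'}, (hf k.1 [] + 1)
        | n :: t => hf n t,
      fun l => match l with
        | [] => ⋃ k : ℕ, ⋃ (_ : [k] ∈ T'), (BBf k [])ᶜ
        | n :: t => BBf n t,
      ⟨[], Or.inl rfl⟩, ?_, ?_, ?_, ?_, ?_, ?_, ?_, ?_, ?_, ?_⟩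
    · rintro s t hst (rfl | ⟨n, u, hu, rfl⟩)
      · exact Or.inl (List.prefix_nil.mp hst)
      · rcases s with _ | ⟨m, s'⟩
        · exact Or.inl rfl
        · obtain ⟨rfl, hs'⟩ := List.cons_prefix_cons.mp hst
          exact Or.inr ⟨m, s', Tpre m s' u hs' hu, rfl⟩
    · rintro ⟨x, hx⟩
      refine Twf (x 0) ⟨fun i => x (i + 1), fun n => ?_⟩
      have h := hx (n + 1)
      rw [List.ofFn_succ] at h
      exact (hmemT' _ _).mp h
    · rintro t ht hex m
      rcases ht with rfl | ⟨n, u, hu, rfl⟩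
      · exact Or.inr ⟨m, [], hnilT m, rfl⟩
      · obtain ⟨k, hk⟩ := hex
        have hk' : u ++ [k] ∈ T n := (hmemT' _ _).mp hk
        exact Or.inr ⟨n, u ++ [m], Tspread n u hu ⟨k, hk'⟩ m, rfl⟩
    · rintro ⟨x, l⟩ ⟨n, t, hΘn, rfl⟩
      obtain ⟨htT, hterm'⟩ := TΘ n (x, t) hΘn
      exact ⟨Or.inr ⟨n, t, htT, rfl⟩, fun k hk => hterm' k ((hmemT' _ _).mp hk)⟩
    · intro t
      rcases t with _ | ⟨n, u⟩
      · have hs : {z : X | (z, ([] : List ℕ)) ∈ Θ'} = ∅ := by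
          ext z
          simp only [hΘ', Set.mem_setOf_eq, Set.mem_empty_iff_false, iff_false, not_exists]
          rintro m t ⟨_, heq⟩
          exact (List.cons_ne_nil m t) heq.symm
        rw [hs]; exact isOpen_empty
      · have hs : {z : X | (z, n :: u) ∈ Θ'} = {z : X | (z, u) ∈ Θ n} := by
          ext z
          simp only [hΘ', Set.mem_setOf_eq]
          constructor
          · rintro ⟨m, t, hm, heq⟩
            injection heq with e1 e2
            subst e1; subst e2; exact hm
          · intro hz; exact ⟨n, u, hz, rfl⟩
        rw [hs]; exact TΘopen n u
    · rintro t (rfl | ⟨n, u, hu, rfl⟩)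
      · rfl
      · exact (Trec n u hu).trans
          (subtype_iSup_congr (fun m => hf n (u ++ [m]) + 1)
            (fun k => (hmemT' n (u ++ [k])).symm))
    · rintro t (rfl | ⟨n, u, hu, rfl⟩) hterm'
      · exact absurd (hconsT' 0) (hterm' 0)
      · have h8 := Tterm n u hu (fun k hk => hterm' k (Or.inr ⟨n, u ++ [k], hk, rfl⟩))
        show BBf n u = _
        rw [h8]
        ext z
        simp only [hΘ', Set.mem_setOf_eq]
        constructor
        · intro hz; exact ⟨n, u, hz, rfl⟩
        · rintro ⟨m, t, hm, heq⟩
          injection heq with e1 e2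
          subst e1; subst e2; exact hm
    · rintro t (rfl | ⟨n, u, hu, rfl⟩) hex
      · rfl
      · obtain ⟨k, hk⟩ := hex
        have hk' : u ++ [k] ∈ T n := (hmemT' _ _).mp hk
        have h9 := Tnont n u hu ⟨k, hk'⟩
        show BBf n u = _
        rw [h9]
        ext z
        simp only [Set.mem_iUnion, Set.mem_compl_iff]
        constructor
        · rintro ⟨k, hk1, hz⟩
          exact ⟨k, Or.inr ⟨n, u ++ [k], hk1, rfl⟩, hz⟩
        · rintro ⟨k, hk1, hz⟩
          exact ⟨k, (hmemT' _ _).mp hk1, hz⟩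
    · refine Ordinal.iSup_le_iff.mpr fun k => ?_
      exact Order.add_one_le_iff.mpr (lt_of_le_of_lt (Tle k.1) (hδβ k.1))
    · ext z
      simp only [Set.mem_iUnion, Set.mem_compl_iff]
      constructor
      · rintro ⟨k, -, hz⟩
        exact ⟨k, by rw [← TBB k]; exact hz⟩
      · rintro ⟨k, hz⟩
        exact ⟨k, hconsT' k, by rw [TBB k]; exact hz⟩
end

section
/- Let D ⊆ 2^ω be a countable set, let h : ω^ω → 2^ω be a topological embedding whose range is 2^ω ∖ D, and let F ⊆ 2^ω × ω^ω be a closed set such that every section F_x (x ∈ 2^ω) is countable. Then the closure K of the set {(x, h(y)) : (x,y) ∈ F} in 2^ω × 2^ω is compact and every section K_x (x ∈ 2^ω) is countable. -/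
/-- If `D ⊆ 2^ω` is countable, `h : ω^ω → 2^ω` is a topological embedding with range
`2^ω ∖ D`, and `F ⊆ 2^ω × ω^ω` is closed with all sections countable, then the closure
`K` of `{(x, h y) : (x, y) ∈ F}` in `2^ω × 2^ω` is compact and all of its sections are
countable. -/
theorem closure_of_embedded_closed_set_compact_countable_sections
    (D : Set (ℕ → Bool)) (hD : D.Countable)
    (h : (ℕ → ℕ) → (ℕ → Bool)) (hemb : Topology.IsEmbedding h)
    (hrange : Set.range h = Dᶜ)
    (F : Set ((ℕ → Bool) × (ℕ → ℕ))) (hFclosed : IsClosed F)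
    (hFsec : ∀ x : ℕ → Bool, {y : ℕ → ℕ | (x, y) ∈ F}.Countable) :
    ∀ K : Set ((ℕ → Bool) × (ℕ → Bool)),
      K = closure ((fun p : (ℕ → Bool) × (ℕ → ℕ) => (p.1, h p.2)) '' F) →
      IsCompact K ∧ ∀ x : ℕ → Bool, {z : ℕ → Bool | (x, z) ∈ K}.Countable := by
  intro K hK
  subst hK
  refine ⟨isClosed_closure.isCompact, fun x => ?_⟩
  have hsub : {z : ℕ → Bool |
      (x, z) ∈ closure ((fun p : (ℕ → Bool) × (ℕ → ℕ) => (p.1, h p.2)) '' F)} ⊆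
      (h '' {y | (x, y) ∈ F}) ∪ D := by
    intro z hz
    by_cases hzD : z ∈ D
    · exact Or.inr hzD
    · left
      have hzr : z ∈ Set.range h := by rw [hrange]; exact hzD
      obtain ⟨y, rfl⟩ := hzr
      obtain ⟨u, hu, hlim⟩ := mem_closure_iff_seq_limit.mp hz
      choose p hp hup using hu
      have hlim' := hlim.congr (fun n => (hup n).symm)
      have h1 : Filter.Tendsto (fun n => (p n).1) Filter.atTop (nhds x) :=
        (continuous_fst.tendsto _).comp hlim'
      have h2 : Filter.Tendsto (fun n => (p n).2) Filter.atTop (nhds y) := by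
        rw [hemb.toIsInducing.tendsto_nhds_iff]
        exact (continuous_snd.tendsto _).comp hlim'
      have hmem : (x, y) ∈ F :=
        hFclosed.isSeqClosed hp (h1.prodMk_nhds h2)
      exact ⟨y, hmem, rfl⟩
  exact (((hFsec x).image h).union hD).mono hsub
end
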